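/- arXiv:1912.10516 — 4 statements merged into one kernel-verified Lean document; each statement's English description precedes it below -/
import Mathlib

section
/- Let q be a prime power, n an odd positive integer, and s_1, …, s_n pairwise distinct q-even integers; write s = (s_1, …, s_n) and, for each j, let s^j denote the tuple obtained by omitting the j-th entry. Then for every integer D ≥ 0, the following identity holds in 𝔽_q(t): Σ_{σ ∈ S_n} sgn(σ)·ζ(D, σ(s)) = Σ_{j=1}^n (−1)^{n−j} ζ(D, (s_j)) · Σ_{σ ∈ S_n^j} sgn(σ)·ζ(D, σ(s^j)), where S_n is the symmetric group on {1, …, n}, S_n^j is the group of permutations of {1, …, n}∖{j}, and signs are viewed in 𝔽_q(t) via the canonical ring map from ℤ. -/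
/-!
STATEMENT 10: Let q be a prime power, n an odd positive integer, and s₁, …, sₙ pairwise
distinct q-even integers.  Then for every integer D ≥ 0, in 𝔽_q(t):
Σ_{σ ∈ Sₙ} sgn(σ)·ζ(D, σ(s)) = Σ_{j=1}^n (−1)^{n−j} ζ(D, (s_j)) · Σ_{σ ∈ Sₙ^j} sgn(σ)·ζ(D, σ(s^j)),
where ζ(D, s) is the truncated multiple zeta value.
-/

noncomputable section

open scoped Classical

/-- `S_d(k) = Σ_{a monic of degree d} a^{-k} ∈ 𝔽_q(t)`. -/
def Sd {F : Type*} [Field F] (d : ℕ) (k : ℤ) : RatFunc F :=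
  ∑ᶠ a ∈ {a : Polynomial F | a.Monic ∧ a.natDegree = d},
    (algebraMap (Polynomial F) (RatFunc F) a) ^ (-k)

/-- The truncated multiple zeta value `ζ(D, (s₁, …, s_r)) ∈ 𝔽_q(t)`, a finite sum over
tuples `D > d₁ > ⋯ > d_r ≥ 0`. -/
def zetaTrunc {F : Type*} [Field F] (D : ℕ) (w : List ℤ) : RatFunc F :=
  ∑ᶠ d ∈ {d : Fin w.length → ℕ | StrictAnti d ∧ ∀ i, d i < D},
    ∏ i, Sd (d i) (w.get i)

/-- The tuple obtained from `s` by omitting its `j`-th entry. -/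
def eraseIdxFun {α : Type*} {n : ℕ} (s : Fin n → α) (j : Fin n) (i : Fin (n - 1)) : α :=
  if h : (i : ℕ) < (j : ℕ) then s ⟨i, by omega⟩ else s ⟨(i : ℕ) + 1, by omega⟩

namespace St10

open Finset Equiv Function
variable {D : ℕ}

lemma revAnti {m : ℕ} : StrictAnti (Fin.rev : Fin m → Fin m) :=
  fun _ _ h => Fin.rev_lt_rev.mpr h

def sortPerm {m : ℕ} (g : Fin m → Fin D) : Equiv.Perm (Fin m) :=
  Fin.revPerm.trans (Tuple.sort g)

lemma strictAnti_comp_sortPerm {m : ℕ} {g : Fin m → Fin D} (hg : Injective g) :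
    StrictAnti (g ∘ sortPerm g) := by
  have h3 : StrictMono (g ∘ Tuple.sort g) :=
    (Tuple.monotone_sort g).strictMono_of_injective (hg.comp (Tuple.sort g).injective)
  exact h3.comp_strictAnti revAnti

lemma strictAnti_range_inj {m : ℕ} {f g : Fin m → Fin D} (hf : StrictAnti f) (hg : StrictAnti g)
    (h : Set.range f = Set.range g) : f = g := by
  have hf' : StrictMono (f ∘ Fin.rev) := hf.comp revAnti
  have hg' : StrictMono (g ∘ Fin.rev) := hg.comp revAnti
  have hr : Set.range (f ∘ Fin.rev) = Set.range (g ∘ Fin.rev) := by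
    rw [Set.range_comp, Set.range_comp]
    have : Set.range (Fin.rev : Fin m → Fin m) = Set.univ :=
      Set.range_eq_univ.mpr Fin.rev_surjective
    rw [this, Set.image_univ, Set.image_univ, h]
  have := (hf'.range_inj hg').mp hr
  funext x
  have h2 := congrFun this (Fin.rev x)
  simpa [Fin.rev_rev] using h2

lemma sortPerm_unique {m : ℕ} {g : Fin m → Fin D} (hg : Injective g) {σ : Equiv.Perm (Fin m)}
    (hσ : StrictAnti (g ∘ σ)) : σ = sortPerm g := by
  have h2 := strictAnti_comp_sortPerm hg
  have h3 : (g ∘ σ) = (g ∘ sortPerm g) := by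
    refine strictAnti_range_inj hσ h2 ?_
    rw [Set.range_comp, Set.range_comp, Equiv.range_eq_univ, Equiv.range_eq_univ]
  exact Equiv.ext fun x => hg (congrFun h3 x)

/-- Laplace-type sign relation for removal of one index. -/
lemma sign_sortPerm_succAbove {m : ℕ} {g : Fin (m+1) → Fin D} (hg : Injective g)
    (j : Fin (m+1)) :
    (Equiv.Perm.sign (sortPerm g) : ℤ)
      = (-1) ^ ((j : ℕ) + (((sortPerm g)⁻¹ j : Fin (m+1)) : ℕ))
        * (Equiv.Perm.sign (sortPerm (g ∘ j.succAbove)) : ℤ) := by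
  set σ := sortPerm g with hσdef
  set p : Fin (m+1) := σ⁻¹ j with hp
  set ψ : Equiv.Perm (Fin (m+1)) := j.cycleRange * σ * (p.cycleRange)⁻¹ with hψ
  have hψ0 : ψ 0 = 0 := by
    have h1 : (p.cycleRange)⁻¹ (0 : Fin (m+1)) = p := by
      rw [Equiv.Perm.inv_def, Equiv.symm_apply_eq, Fin.cycleRange_self]
    have h2 : σ p = j := by rw [hp]; exact Equiv.apply_symm_apply σ j
    simp [hψ, Equiv.Perm.mul_apply, h1, h2, Fin.cycleRange_self]
  set τ : Equiv.Perm (Fin m) := (Equiv.Perm.decomposeFin ψ).2 with hτ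
  have hdec : ψ = Equiv.Perm.decomposeFin.symm (0, τ) := by
    have h1 : (Equiv.Perm.decomposeFin ψ).1 = 0 := by
      rw [← hψ0]
      conv_rhs => rw [← Equiv.symm_apply_apply Equiv.Perm.decomposeFin ψ]
      rw [show Equiv.Perm.decomposeFin ψ
            = ((Equiv.Perm.decomposeFin ψ).1, (Equiv.Perm.decomposeFin ψ).2) from rfl,
        Equiv.Perm.decomposeFin_symm_apply_zero]
    calc ψ = Equiv.Perm.decomposeFin.symm (Equiv.Perm.decomposeFin ψ) :=
            (Equiv.symm_apply_apply _ _).symm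
      _ = Equiv.Perm.decomposeFin.symm (0, τ) := by rw [hτ, ← h1]
  have hψsucc : ∀ k : Fin m, ψ k.succ = (τ k).succ := by
    intro k
    rw [hdec, Equiv.Perm.decomposeFin_symm_apply_succ, Equiv.swap_self]
    rfl
  have hcomp : (g ∘ j.succAbove) ∘ τ = (g ∘ σ) ∘ p.succAbove := by
    funext k
    have h1 : j.cycleRange (j.succAbove (τ k)) = (τ k).succ := Fin.cycleRange_succAbove j (τ k)
    have h2 : (p.cycleRange)⁻¹ (k.succ) = p.succAbove k := by
      rw [Equiv.Perm.inv_def, Equiv.symm_apply_eq, Fin.cycleRange_succAbove]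
    have h3 : ψ k.succ = j.cycleRange (σ ((p.cycleRange)⁻¹ k.succ)) := rfl
    have h4 : j.cycleRange (j.succAbove (τ k)) = j.cycleRange (σ (p.succAbove k)) := by
      rw [h1, hψsucc k |>.symm, h3, h2]
    have h5 := j.cycleRange.injective h4
    simp only [Function.comp_apply]
    rw [h5]
  have hinj : Injective (g ∘ j.succAbove) := hg.comp (Fin.succAbove_right_injective)
  have hτs : τ = sortPerm (g ∘ j.succAbove) := by
    apply sortPerm_unique hinj
    rw [hcomp]
    exact (strictAnti_comp_sortPerm hg).comp_strictMono (Fin.strictMono_succAbove p)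
  -- signs
  have hsψ : Equiv.Perm.sign ψ = Equiv.Perm.sign τ := by
    rw [hdec, Equiv.Perm.decomposeFin.symm_sign, if_pos rfl, one_mul]
  have hsψ2 : Equiv.Perm.sign ψ
      = (-1) ^ (j : ℕ) * Equiv.Perm.sign σ * (-1) ^ (p : ℕ) := by
    rw [hψ, map_mul, map_mul, Equiv.Perm.sign_inv, Fin.sign_cycleRange, Fin.sign_cycleRange]
  have hZ : (Equiv.Perm.sign τ : ℤ)
      = (-1) ^ (j : ℕ) * (Equiv.Perm.sign σ : ℤ) * (-1) ^ (p : ℕ) := by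
    rw [← hsψ, hsψ2]
    push_cast
    ring
  rw [← hτs]
  have hj2 : ((-1 : ℤ)) ^ (j : ℕ) * (-1) ^ (j : ℕ) = 1 := by
    rw [← pow_add]; exact Even.neg_one_pow ⟨(j : ℕ), by ring⟩
  have hp2 : ((-1 : ℤ)) ^ (p : ℕ) * (-1) ^ (p : ℕ) = 1 := by
    rw [← pow_add]; exact Even.neg_one_pow ⟨(p : ℕ), by ring⟩
  rw [hZ, pow_add]
  linear_combination (-((Equiv.Perm.sign σ : ℤ) * ((-1 : ℤ) ^ (p : ℕ) * (-1) ^ (p : ℕ)))) * hj2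
    + (-(Equiv.Perm.sign σ : ℤ)) * hp2


variable {R : Type*} [CommRing R]

abbrev sgnR (R : Type*) [CommRing R] {m : ℕ} (σ : Equiv.Perm (Fin m)) : R :=
  ((Equiv.Perm.sign σ : ℤ) : R)

def chains (m D : ℕ) : Finset (Fin m → Fin D) := Finset.univ.filter (fun d => StrictAnti d)

def injs (m D : ℕ) : Finset (Fin m → Fin D) := Finset.univ.filter (fun g => Injective g)

/-- Collapse of the signed sum over permutations and chains into a sum over injections. -/
lemma collapse {m : ℕ} (v : Fin m → Fin D → R) :
    ∑ σ : Equiv.Perm (Fin m), sgnR R σ * ∑ d ∈ chains m D, ∏ i, v (σ i) (d i)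
    = ∑ g ∈ injs m D, sgnR R (sortPerm g) * ∏ j, v j (g j) := by
  simp_rw [Finset.mul_sum]
  rw [← Finset.sum_product']
  refine Finset.sum_bij' (i := fun x _ => x.2 ∘ ((x.1⁻¹ : Equiv.Perm (Fin m)) : Fin m → Fin m))
    (j := fun g _ => (sortPerm g, g ∘ sortPerm g)) ?_ ?_ ?_ ?_ ?_
  · rintro ⟨σ, d⟩ hx
    rw [Finset.mem_product, chains, Finset.mem_filter] at hx
    rw [injs, Finset.mem_filter]
    exact ⟨Finset.mem_univ _, (hx.2.2.injective).comp (σ⁻¹).injective⟩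
  · intro g hx
    rw [injs, Finset.mem_filter] at hx
    rw [Finset.mem_product, chains, Finset.mem_filter]
    refine ⟨Finset.mem_univ _, Finset.mem_univ _, strictAnti_comp_sortPerm hx.2⟩
  · rintro ⟨σ, d⟩ hx
    rw [Finset.mem_product, chains, Finset.mem_filter] at hx
    have hinj : Injective (d ∘ (σ⁻¹ : Equiv.Perm (Fin m))) :=
      (hx.2.2.injective).comp (σ⁻¹).injective
    have hs : σ = sortPerm (d ∘ (σ⁻¹ : Equiv.Perm (Fin m))) := by
      apply sortPerm_unique hinj
      have : (d ∘ (σ⁻¹ : Equiv.Perm (Fin m))) ∘ σ = d := by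
        funext x; simp
      rw [this]; exact hx.2.2
    refine Prod.ext ?_ ?_
    · exact hs.symm
    · show (d ∘ (σ⁻¹ : Equiv.Perm (Fin m))) ∘ (sortPerm (d ∘ (σ⁻¹ : Equiv.Perm (Fin m)))) = d
      rw [← hs]; funext x; simp
  · intro g hx
    show (g ∘ sortPerm g) ∘ ((sortPerm g)⁻¹ : Equiv.Perm (Fin m)) = g
    funext x; simp
  · rintro ⟨σ, d⟩ hx
    rw [Finset.mem_product, chains, Finset.mem_filter] at hx
    have hinj : Injective (d ∘ (σ⁻¹ : Equiv.Perm (Fin m))) :=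
      (hx.2.2.injective).comp (σ⁻¹).injective
    have hs : σ = sortPerm (d ∘ (σ⁻¹ : Equiv.Perm (Fin m))) := by
      apply sortPerm_unique hinj
      have : (d ∘ (σ⁻¹ : Equiv.Perm (Fin m))) ∘ σ = d := by
        funext x; simp
      rw [this]; exact hx.2.2
    rw [← hs]
    congr 1
    have := Equiv.prod_comp σ (fun j => v j ((d ∘ (σ⁻¹ : Equiv.Perm (Fin m))) j))
    rw [← this]
    refine Finset.prod_congr rfl ?_
    intro i _
    simp


lemma zetaTrunc_cast {F : Type*} [Field F] {D : ℕ} (w : List ℤ) (k : ℕ) (h : w.length = k) :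
    zetaTrunc (F := F) D w
      = ∑ᶠ d ∈ {d : Fin k → ℕ | StrictAnti d ∧ ∀ i, d i < D},
          ∏ i, Sd (d i) (w.get (Fin.cast h.symm i)) := by
  subst h; rfl

lemma finsum_chains {M : Type*} [AddCommMonoid M] {D : ℕ} (k : ℕ) (Φ : (Fin k → ℕ) → M) :
    (∑ᶠ d ∈ {d : Fin k → ℕ | StrictAnti d ∧ ∀ i, d i < D}, Φ d)
      = ∑ d ∈ chains k D, Φ (fun i => ((d i : ℕ))) := by
  have hfin : Set.Finite {d : Fin k → ℕ | StrictAnti d ∧ ∀ i, d i < D} := by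
    refine Set.Finite.subset (Set.Finite.pi (fun i : Fin k => Set.finite_Iio D)) ?_
    intro d hd
    simp only [Set.mem_pi, Set.mem_univ, Set.mem_Iio, forall_true_left]
    exact fun i => hd.2 i
  rw [finsum_mem_eq_finite_toFinset_sum _ hfin]
  refine Finset.sum_bij (i := fun d hd => fun i =>
      (⟨d i, ((hfin.mem_toFinset.mp hd).2 i)⟩ : Fin D)) ?_ ?_ ?_ ?_
  · intro d hd
    have hmem := hfin.mem_toFinset.mp hd
    rw [chains, Finset.mem_filter]
    refine ⟨Finset.mem_univ _, ?_⟩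
    intro a b hab
    exact Fin.mk_lt_mk.mpr (hmem.1 hab)
  · intro d hd d' hd' heq
    funext i
    have := congrFun heq i
    simpa using this
  · intro c hc
    rw [chains, Finset.mem_filter] at hc
    have hmem : (fun i => ((c i : ℕ))) ∈ hfin.toFinset := by
      rw [hfin.mem_toFinset]
      constructor
      · intro a b hab
        exact hc.2 hab
      · intro i; exact (c i).isLt
    refine ⟨_, hmem, ?_⟩
    funext i
    exact Fin.ext rfl
  · intro d hd
    rfl

lemma zetaTrunc_ofFn {F : Type*} [Field F] {D : ℕ} (k : ℕ) (f : Fin k → ℤ) :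
    zetaTrunc (F := F) D (List.ofFn f)
      = ∑ d ∈ chains k D, ∏ i, Sd ((d i : ℕ)) (f i) := by
  rw [zetaTrunc_cast (List.ofFn f) k (List.length_ofFn (f := f))]
  have hget : ∀ i : Fin k, (List.ofFn f).get (Fin.cast (List.length_ofFn (f := f)).symm i) = f i := by
    intro i
    rw [List.get_ofFn]
    congr 1
  simp_rw [hget]
  exact finsum_chains k (fun d => ∏ i, Sd (d i) (f i))

lemma strictAnti_of_subsingleton {α : Type*} [Preorder α] [Subsingleton α] {β : Type*}
    [Preorder β] (f : α → β) : StrictAnti f := by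
  intro a b hab
  exact absurd (Subsingleton.elim a b) hab.ne

lemma zetaTrunc_single {F : Type*} [Field F] {D : ℕ} (x : ℤ) :
    zetaTrunc (F := F) D [x] = ∑ e : Fin D, Sd ((e : ℕ)) x := by
  have h1 : (List.ofFn fun _ : Fin 1 => x) = [x] := by simp [List.ofFn_succ]
  rw [← h1, zetaTrunc_ofFn 1 (fun _ => x)]
  have h2 : chains 1 D = Finset.univ := by
    rw [chains]
    refine Finset.filter_true_of_mem ?_
    intro d _
    exact strictAnti_of_subsingleton d
  rw [h2]
  rw [← (Equiv.funUnique (Fin 1) (Fin D)).symm.sum_comp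
    (fun d : Fin 1 → Fin D => ∏ i : Fin 1, Sd ((d i : ℕ)) x)]
  refine Finset.sum_congr rfl ?_
  intro e _
  rw [Fin.prod_univ_one]
  rfl

lemma perm_sum_eq {F : Type*} [Field F] {D : ℕ} (k : ℕ) (f : Fin k → ℤ) :
    ∑ σ : Equiv.Perm (Fin k), (Equiv.Perm.sign σ : ℤ) • zetaTrunc (F := F) D (List.ofFn (f ∘ σ))
      = ∑ g ∈ injs k D, sgnR (RatFunc F) (sortPerm g) * ∏ j, Sd ((g j : ℕ)) (f j) := by
  rw [← collapse (fun a e => Sd ((e : ℕ)) (f a))]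
  refine Finset.sum_congr rfl ?_
  intro σ _
  rw [zetaTrunc_ofFn k (f ∘ σ)]
  rw [zsmul_eq_mul]
  rfl


section CoreLemmas
variable {R : Type*} [CommRing R] {D : ℕ}

lemma val_succAbove {n : ℕ} (p : Fin (n+1)) (i : Fin n) :
    ((p.succAbove i : Fin (n+1)) : ℕ) = if (i : ℕ) < (p : ℕ) then (i : ℕ) else (i : ℕ) + 1 := by
  rcases lt_or_ge (Fin.castSucc i) p with h | h
  · rw [Fin.succAbove_of_castSucc_lt p i h, if_pos (by exact Fin.lt_def.mp h)]
    rfl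
  · rw [Fin.succAbove_of_le_castSucc p i h, if_neg (by
      have := Fin.le_def.mp h
      simp only [Fin.coe_castSucc] at this
      omega)]
    rfl

lemma sum_range_neg_one_pow (n : ℕ) :
    ∑ i ∈ Finset.range n, (-1 : R) ^ i = if Even n then 0 else 1 := by
  induction n with
  | zero => simp
  | succ k ih =>
    rw [Finset.sum_range_succ, ih]
    rcases Nat.even_or_odd k with h | h
    · rw [if_pos h, if_neg (by simp [Nat.even_add_one, h]), h.neg_one_pow, zero_add]
    · rw [if_neg (Nat.not_even_iff_odd.mpr h),
        if_pos (Nat.even_add_one.mpr (Nat.not_even_iff_odd.mpr h)), h.neg_one_pow]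
      ring

lemma neg_one_sum {m : ℕ} (hm : Even m) : ∑ i : Fin (m+1), (-1 : R) ^ (i : ℕ) = 1 := by
  rw [Fin.sum_univ_eq_sum_range (fun i => (-1 : R) ^ i) (m+1), sum_range_neg_one_pow]
  rw [if_neg (by simp [Nat.even_add_one, hm])]

lemma negpow_sub {m j : ℕ} (hm : Even m) (hj : j ≤ m) : ((-1 : R)) ^ (m - j) = (-1) ^ j := by
  have h2 : ((-1 : R)) ^ j * (-1) ^ j = 1 := by
    rw [← pow_add]; exact Even.neg_one_pow ⟨j, by ring⟩
  have h3 : (m - j) + j = m := by omega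
  calc ((-1 : R)) ^ (m - j) = (-1) ^ (m - j) * ((-1) ^ j * (-1) ^ j) := by rw [h2, mul_one]
    _ = ((-1) ^ ((m - j) + j)) * (-1) ^ j := by rw [pow_add]; ring
    _ = (-1) ^ j := by rw [h3, hm.neg_one_pow, one_mul]

lemma sign_sortPerm_succAbove' {m : ℕ} {g : Fin (m+1) → Fin D} (hg : Injective g)
    (j : Fin (m+1)) :
    (Equiv.Perm.sign (sortPerm (g ∘ j.succAbove)) : ℤ)
      = (-1) ^ ((j : ℕ) + (((sortPerm g)⁻¹ j : Fin (m+1)) : ℕ))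
        * (Equiv.Perm.sign (sortPerm g) : ℤ) := by
  have h := sign_sortPerm_succAbove hg j
  have hsq : ((-1 : ℤ)) ^ ((j : ℕ) + (((sortPerm g)⁻¹ j : Fin (m+1)) : ℕ))
      * ((-1) ^ ((j : ℕ) + (((sortPerm g)⁻¹ j : Fin (m+1)) : ℕ))) = 1 := by
    rw [← pow_add]; exact Even.neg_one_pow ⟨_, rfl⟩
  linear_combination (-((-1 : ℤ) ^ ((j : ℕ) + (((sortPerm g)⁻¹ j : Fin (m+1)) : ℕ)))) * h
    - (Equiv.Perm.sign (sortPerm (g ∘ j.succAbove)) : ℤ) * hsq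

/-- injectivity off `j` -/
lemma offInj_eq {m : ℕ} {G : Fin (m+1) → Fin D} {j : Fin (m+1)}
    (hG : Injective (G ∘ j.succAbove)) {a b : Fin (m+1)} (ha : a ≠ j) (hb : b ≠ j)
    (hab : G a = G b) : a = b := by
  obtain ⟨a', rfl⟩ := Fin.exists_succAbove_eq ha
  obtain ⟨b', rfl⟩ := Fin.exists_succAbove_eq hb
  exact congrArg j.succAbove (hG hab)

lemma partner_exists {m : ℕ} {G : Fin (m+1) → Fin D} {j : Fin (m+1)}
    (hG : Injective (G ∘ j.succAbove)) (hN : ¬ Injective G) :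
    ∃ j', j' ≠ j ∧ G j' = G j := by
  rw [Function.not_injective_iff] at hN
  obtain ⟨a, b, hab, hne⟩ := hN
  by_cases ha : a = j
  · exact ⟨b, fun h => hne (h ▸ ha ▸ rfl), by rw [ha] at hab; exact hab.symm⟩
  · by_cases hb : b = j
    · exact ⟨a, ha, by rw [hb] at hab; exact hab⟩
    · exact absurd (offInj_eq hG ha hb hab) hne

lemma partner_swap {m : ℕ} {G : Fin (m+1) → Fin D} {j j' : Fin (m+1)}
    (hG : Injective (G ∘ j.succAbove)) (hj' : j' ≠ j) (heq : G j' = G j) :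
    Injective (G ∘ j'.succAbove) := by
  intro x y hxy
  simp only [Function.comp_apply] at hxy
  have hx' : j'.succAbove x ≠ j' := Fin.succAbove_ne j' x
  have hy' : j'.succAbove y ≠ j' := Fin.succAbove_ne j' y
  apply Fin.succAbove_right_injective (p := j')
  by_cases hxj : j'.succAbove x = j
  · by_cases hyj : j'.succAbove y = j
    · rw [hxj, hyj]
    · exfalso
      refine hy' (offInj_eq hG hyj hj' ?_)
      rw [← hxy, hxj]
      exact heq.symm
  · by_cases hyj : j'.succAbove y = j
    · exfalso
      refine hx' (offInj_eq hG hxj hj' ?_)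
      rw [hxy, hyj]
      exact heq.symm
    · exact offInj_eq hG hxj hyj hxy

end CoreLemmas


section PairSign
variable {R : Type*} [CommRing R] {D : ℕ}

lemma pair_sign_lt {k : ℕ} {G : Fin (k+2) → Fin D} {j j' : Fin (k+2)}
    (hlt : j < j') (heq : G j' = G j)
    (hj : Injective (G ∘ j.succAbove)) (hj' : Injective (G ∘ j'.succAbove)) :
    (Equiv.Perm.sign (sortPerm (G ∘ j.succAbove)) : ℤ) * (-1) ^ ((j : ℕ))
      = - ((Equiv.Perm.sign (sortPerm (G ∘ j'.succAbove)) : ℤ) * (-1) ^ ((j' : ℕ))) := by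
  obtain ⟨q, hq⟩ := Fin.exists_succAbove_eq (show j' ≠ j from hlt.ne')
  obtain ⟨q', hq'⟩ := Fin.exists_succAbove_eq (show j ≠ j' from hlt.ne)
  have hl : (j : ℕ) < (j' : ℕ) := Fin.lt_def.mp hlt
  have hqv : (q : ℕ) + 1 = (j' : ℕ) := by
    have h1 := congrArg Fin.val hq
    rw [val_succAbove] at h1
    by_cases h2 : (q : ℕ) < (j : ℕ)
    · rw [if_pos h2] at h1; omega
    · rw [if_neg h2] at h1; omega
  have hq'v : (q' : ℕ) = (j : ℕ) := by
    have h1 := congrArg Fin.val hq'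
    rw [val_succAbove] at h1
    by_cases h2 : (q' : ℕ) < (j' : ℕ)
    · rw [if_pos h2] at h1; omega
    · rw [if_neg h2] at h1; omega
  have hcomp : (G ∘ j.succAbove) ∘ q.succAbove = (G ∘ j'.succAbove) ∘ q'.succAbove := by
    funext x
    simp only [Function.comp_apply]
    congr 1
    apply Fin.ext
    simp only [val_succAbove]
    split_ifs <;> omega
  have e1 := sign_sortPerm_succAbove hj q
  have e2 := sign_sortPerm_succAbove hj' q'
  have hr : (((sortPerm (G ∘ j.succAbove))⁻¹ q : Fin (k+1)) : ℕ)
      = (((sortPerm (G ∘ j'.succAbove))⁻¹ q' : Fin (k+1)) : ℕ) := by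
    have hA : StrictAnti ((G ∘ j.succAbove) ∘ sortPerm (G ∘ j.succAbove)) :=
      strictAnti_comp_sortPerm hj
    have hB : StrictAnti ((G ∘ j'.succAbove) ∘ sortPerm (G ∘ j'.succAbove)) :=
      strictAnti_comp_sortPerm hj'
    have himg : G '' ({j}ᶜ) = G '' ({j'}ᶜ) := by
      apply Set.Subset.antisymm
      · rintro _ ⟨a, ha, rfl⟩
        by_cases h3 : a = j'
        · exact ⟨j, by simp [hlt.ne], by rw [h3, heq]⟩
        · exact ⟨a, h3, rfl⟩
      · rintro _ ⟨a, ha, rfl⟩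
        by_cases h3 : a = j
        · exact ⟨j', by simp [hlt.ne'], by rw [h3, ← heq]⟩
        · exact ⟨a, h3, rfl⟩
    have hrange : Set.range ((G ∘ j.succAbove) ∘ sortPerm (G ∘ j.succAbove))
        = Set.range ((G ∘ j'.succAbove) ∘ sortPerm (G ∘ j'.succAbove)) := by
      rw [Set.range_comp, Set.range_comp, Equiv.range_eq_univ, Equiv.range_eq_univ,
        Set.image_univ, Set.image_univ, Set.range_comp, Set.range_comp,
        Fin.range_succAbove, Fin.range_succAbove, himg]
    have hchain := strictAnti_range_inj hA hB hrange
    have hv1 : ((G ∘ j.succAbove) ∘ sortPerm (G ∘ j.succAbove))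
        ((sortPerm (G ∘ j.succAbove))⁻¹ q) = G j := by
      simp only [Function.comp_apply, Equiv.Perm.inv_def, Equiv.apply_symm_apply]
      rw [hq]
      exact heq
    have hv2 : ((G ∘ j'.succAbove) ∘ sortPerm (G ∘ j'.succAbove))
        ((sortPerm (G ∘ j'.succAbove))⁻¹ q') = G j := by
      simp only [Function.comp_apply, Equiv.Perm.inv_def, Equiv.apply_symm_apply]
      rw [hq']
    have hsame : ((G ∘ j.succAbove) ∘ sortPerm (G ∘ j.succAbove))
          ((sortPerm (G ∘ j.succAbove))⁻¹ q)
        = ((G ∘ j.succAbove) ∘ sortPerm (G ∘ j.succAbove))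
          ((sortPerm (G ∘ j'.succAbove))⁻¹ q') := by
      rw [hv1, hchain, hv2]
    exact congrArg Fin.val (hA.injective hsame)
  rw [hcomp] at e1
  rw [hr] at e1
  rw [e1, e2]
  have hpow : ((-1 : ℤ)) ^ ((q' : ℕ) + (((sortPerm (G ∘ j'.succAbove))⁻¹ q' : Fin (k+1)) : ℕ))
        * (-1) ^ ((j' : ℕ))
      = -(((-1 : ℤ)) ^ ((q : ℕ) + (((sortPerm (G ∘ j'.succAbove))⁻¹ q' : Fin (k+1)) : ℕ))
        * (-1) ^ ((j : ℕ))) := by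
    rw [← pow_add, ← pow_add]
    have hstep : (q' : ℕ) + (((sortPerm (G ∘ j'.succAbove))⁻¹ q' : Fin (k+1)) : ℕ) + (j' : ℕ)
        = ((q : ℕ) + (((sortPerm (G ∘ j'.succAbove))⁻¹ q' : Fin (k+1)) : ℕ) + (j : ℕ)) + 1 := by
      omega
    rw [hstep, pow_succ]
    ring
  linear_combination (Equiv.Perm.sign (sortPerm ((G ∘ j'.succAbove) ∘ q'.succAbove)) : ℤ) * hpow

lemma pair_sign {k : ℕ} {G : Fin (k+2) → Fin D} {j j' : Fin (k+2)}
    (hne : j' ≠ j) (heq : G j' = G j)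
    (hj : Injective (G ∘ j.succAbove)) (hj' : Injective (G ∘ j'.succAbove)) :
    (Equiv.Perm.sign (sortPerm (G ∘ j.succAbove)) : ℤ) * (-1) ^ ((j : ℕ))
      = - ((Equiv.Perm.sign (sortPerm (G ∘ j'.succAbove)) : ℤ) * (-1) ^ ((j' : ℕ))) := by
  rcases hne.lt_or_gt with hlt | hlt
  · have := pair_sign_lt hlt heq.symm hj' hj
    linear_combination this
  · exact pair_sign_lt hlt heq hj hj'

end PairSign


section CoreMain
variable {R : Type*} [CommRing R] {D : ℕ}

lemma step1 {m : ℕ} (v : Fin (m+1) → Fin D → R) (j : Fin (m+1)) :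
    (∑ e : Fin D, v j e) * ∑ h ∈ injs m D, sgnR R (sortPerm h) * ∏ k, v (j.succAbove k) (h k)
      = ∑ G ∈ Finset.univ.filter (fun G : Fin (m+1) → Fin D => Injective (G ∘ j.succAbove)),
          sgnR R (sortPerm (G ∘ j.succAbove)) * ∏ a, v a (G a) := by
  rw [Finset.sum_mul_sum]
  rw [← Finset.sum_product']
  refine Finset.sum_bij' (i := fun x _ => j.insertNth x.1 x.2)
    (j := fun G _ => (G j, G ∘ j.succAbove)) ?_ ?_ ?_ ?_ ?_
  · rintro ⟨e, h⟩ hx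
    rw [Finset.mem_product, injs, Finset.mem_filter] at hx
    rw [Finset.mem_filter]
    refine ⟨Finset.mem_univ _, ?_⟩
    have hcomp : (j.insertNth e h) ∘ j.succAbove = h := by
      funext k; exact Fin.insertNth_apply_succAbove (α := fun _ => Fin D) j e h k
    rw [hcomp]
    exact hx.2.2
  · intro G hG
    rw [Finset.mem_filter] at hG
    rw [Finset.mem_product, injs, Finset.mem_filter]
    exact ⟨Finset.mem_univ _, Finset.mem_univ _, hG.2⟩
  · rintro ⟨e, h⟩ hx
    refine Prod.ext ?_ ?_
    · exact Fin.insertNth_apply_same (α := fun _ => Fin D) j e h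
    · show (j.insertNth e h) ∘ j.succAbove = h
      funext k; exact Fin.insertNth_apply_succAbove (α := fun _ => Fin D) j e h k
  · intro G hG
    show j.insertNth (G j) (G ∘ j.succAbove) = G
    funext a
    refine Fin.succAboveCases j ?_ ?_ a
    · exact Fin.insertNth_apply_same (α := fun _ => Fin D) j _ _
    · intro k; exact Fin.insertNth_apply_succAbove (α := fun _ => Fin D) j _ _ k
  · rintro ⟨e, h⟩ hx
    have h1 : (j.insertNth (α := fun _ => Fin D) e h) ∘ j.succAbove = h := by
      funext k; exact Fin.insertNth_apply_succAbove (α := fun _ => Fin D) j e h k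
    have h2 : ∏ a, v a ((j.insertNth (α := fun _ => Fin D) e h) a)
        = v j e * ∏ k, v (j.succAbove k) (h k) := by
      rw [Fin.prod_univ_succAbove (fun a => v a ((j.insertNth (α := fun _ => Fin D) e h) a)) j,
        Fin.insertNth_apply_same (α := fun _ => Fin D)]
      congr 1
      refine Finset.prod_congr rfl fun k _ => ?_
      rw [Fin.insertNth_apply_succAbove (α := fun _ => Fin D)]
    rw [h1, h2]
    ring

lemma partB_aux {k : ℕ} (hm : Even (k+1)) (v : Fin (k+2) → Fin D → R) :
    ∑ x : Fin (k+2) × (Fin (k+2) → Fin D),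
      (if Injective (x.2 ∘ x.1.succAbove) ∧ ¬ Injective x.2 then
        (-1 : R) ^ (k + 1 - (x.1 : ℕ))
          * (sgnR R (sortPerm (x.2 ∘ x.1.succAbove)) * ∏ a, v a (x.2 a))
      else 0) = 0 := by
  set inv : (Fin (k+2) × (Fin (k+2) → Fin D)) → (Fin (k+2) × (Fin (k+2) → Fin D)) := fun x =>
    if h : (Injective (x.2 ∘ x.1.succAbove) ∧ ¬ Injective x.2) then
      ((partner_exists h.1 h.2).choose, x.2)
    else x with hinv
  have hspec : ∀ (j : Fin (k+2)) (G : Fin (k+2) → Fin D)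
      (h : Injective (G ∘ j.succAbove) ∧ ¬ Injective G),
      (partner_exists h.1 h.2).choose ≠ j ∧ G ((partner_exists h.1 h.2).choose) = G j :=
    fun j G h => (partner_exists h.1 h.2).choose_spec
  have hcond : ∀ (j : Fin (k+2)) (G : Fin (k+2) → Fin D)
      (h : Injective (G ∘ j.succAbove) ∧ ¬ Injective G),
      Injective (G ∘ ((partner_exists h.1 h.2).choose).succAbove) ∧ ¬ Injective G :=
    fun j G h => ⟨partner_swap h.1 (hspec j G h).1 (hspec j G h).2, h.2⟩
  refine Finset.sum_ninvolution inv ?_ ?_ (fun a => Finset.mem_univ _) ?_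
  · -- F x + F (inv x) = 0
    rintro ⟨j, G⟩
    by_cases h : Injective (G ∘ j.succAbove) ∧ ¬ Injective G
    · have hinvx : inv (j, G) = ((partner_exists h.1 h.2).choose, G) := by
        rw [hinv]; exact dif_pos h
      rw [hinvx]
      dsimp only
      rw [if_pos h, if_pos (hcond j G h)]
      set j' := (partner_exists h.1 h.2).choose with hj'
      have hps := pair_sign (hspec j G h).1 (hspec j G h).2 h.1 (hcond j G h).1
      have hpsR := congrArg (fun z : ℤ => (z : R)) hps
      push_cast at hpsR
      rw [negpow_sub hm (Nat.lt_succ_iff.mp j.isLt),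
        negpow_sub hm (Nat.lt_succ_iff.mp j'.isLt)]
      show (-1 : R) ^ (j : ℕ)
          * (((Equiv.Perm.sign (sortPerm (G ∘ j.succAbove)) : ℤ) : R) * ∏ a, v a (G a))
        + (-1 : R) ^ (j' : ℕ)
          * (((Equiv.Perm.sign (sortPerm (G ∘ j'.succAbove)) : ℤ) : R) * ∏ a, v a (G a)) = 0
      linear_combination (∏ a, v a (G a)) * hpsR
    · have hinvx : inv (j, G) = (j, G) := by rw [hinv]; exact dif_neg h
      rw [hinvx]
      dsimp only
      rw [if_neg h]
      exact add_zero 0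
  · -- F x ≠ 0 → inv x ≠ x
    rintro ⟨j, G⟩ hFx
    by_cases h : Injective (G ∘ j.succAbove) ∧ ¬ Injective G
    · have hinvx : inv (j, G) = ((partner_exists h.1 h.2).choose, G) := by
        rw [hinv]; exact dif_pos h
      rw [hinvx]
      intro hcontra
      exact (hspec j G h).1 (congrArg Prod.fst hcontra)
    · exfalso
      apply hFx
      dsimp only
      rw [if_neg h]
  · -- inv (inv x) = x
    rintro ⟨j, G⟩
    by_cases h : Injective (G ∘ j.succAbove) ∧ ¬ Injective G
    · have hinvx : inv (j, G) = ((partner_exists h.1 h.2).choose, G) := by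
        rw [hinv]; exact dif_pos h
      set j' := (partner_exists h.1 h.2).choose with hj'
      have h2 : Injective (G ∘ j'.succAbove) ∧ ¬ Injective G := hcond j G h
      have hinvx2 : inv (j', G) = ((partner_exists h2.1 h2.2).choose, G) := by
        rw [hinv]; exact dif_pos h2
      rw [hinvx, hinvx2]
      have huniq : (partner_exists h2.1 h2.2).choose = j := by
        have hs2 := hspec j' G h2
        refine offInj_eq h2.1 hs2.1 (Ne.symm (hspec j G h).1) ?_
        rw [hs2.2, (hspec j G h).2]
      rw [huniq]
    · have hinvx : inv (j, G) = (j, G) := by rw [hinv]; exact dif_neg h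
      rw [hinvx, hinvx]

lemma partB {m : ℕ} (hm : Even m) (v : Fin (m+1) → Fin D → R) :
    ∑ j : Fin (m+1), ∑ G ∈ (Finset.univ.filter
          (fun G : Fin (m+1) → Fin D => Injective (G ∘ j.succAbove))).filter
        (fun G => ¬ Injective G),
      (-1 : R) ^ (m - (j : ℕ)) * (sgnR R (sortPerm (G ∘ j.succAbove)) * ∏ a, v a (G a)) = 0 := by
  rcases m with _ | k
  · have hall : ∀ G : Fin 1 → Fin D, Injective G := fun G a b _ => Subsingleton.elim a b
    have hempty : ∀ j : Fin 1, ((Finset.univ.filter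
          (fun G : Fin 1 → Fin D => Injective (G ∘ j.succAbove))).filter
        (fun G => ¬ Injective G)) = ∅ := by
      intro j
      apply Finset.filter_false_of_mem
      intro G _
      simp [hall G]
    simp [hempty]
  · have h := partB_aux (D := D) (R := R) (k := k) hm v
    rw [Fintype.sum_prod_type] at h
    simp_rw [Finset.filter_filter, Finset.sum_filter]
    exact h

lemma core {m : ℕ} (hm : Even m) (v : Fin (m+1) → Fin D → R) :
    ∑ j : Fin (m+1), (-1 : R) ^ (m - (j : ℕ)) * ((∑ e : Fin D, v j e) *
        ∑ h ∈ injs m D, sgnR R (sortPerm h) * ∏ k, v (j.succAbove k) (h k))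
    = ∑ g ∈ injs (m+1) D, sgnR R (sortPerm g) * ∏ a, v a (g a) := by
  have hfil : ∀ j : Fin (m+1), (Finset.univ.filter
        (fun G : Fin (m+1) → Fin D => Injective (G ∘ j.succAbove))).filter
      (fun G => Injective G) = injs (m+1) D := by
    intro j
    ext G
    simp only [injs, Finset.mem_filter, Finset.mem_univ, true_and]
    exact ⟨fun h => h.2, fun h => ⟨h.comp Fin.succAbove_right_injective, h⟩⟩
  calc ∑ j : Fin (m+1), (-1 : R) ^ (m - (j : ℕ)) * ((∑ e : Fin D, v j e) *
        ∑ h ∈ injs m D, sgnR R (sortPerm h) * ∏ k, v (j.succAbove k) (h k))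
      = ∑ j : Fin (m+1), ∑ G ∈ Finset.univ.filter
            (fun G : Fin (m+1) → Fin D => Injective (G ∘ j.succAbove)),
          (-1 : R) ^ (m - (j : ℕ))
            * (sgnR R (sortPerm (G ∘ j.succAbove)) * ∏ a, v a (G a)) := by
        refine Finset.sum_congr rfl fun j _ => ?_
        rw [step1 v j, Finset.mul_sum]
    _ = ∑ j : Fin (m+1),
          ((∑ G ∈ (Finset.univ.filter
              (fun G : Fin (m+1) → Fin D => Injective (G ∘ j.succAbove))).filter
              (fun G => Injective G),
            (-1 : R) ^ (m - (j : ℕ))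
              * (sgnR R (sortPerm (G ∘ j.succAbove)) * ∏ a, v a (G a)))
          + ∑ G ∈ (Finset.univ.filter
              (fun G : Fin (m+1) → Fin D => Injective (G ∘ j.succAbove))).filter
              (fun G => ¬ Injective G),
            (-1 : R) ^ (m - (j : ℕ))
              * (sgnR R (sortPerm (G ∘ j.succAbove)) * ∏ a, v a (G a))) := by
        refine Finset.sum_congr rfl fun j _ => ?_
        rw [Finset.sum_filter_add_sum_filter_not]
    _ = (∑ j : Fin (m+1), ∑ G ∈ injs (m+1) D,
          (-1 : R) ^ (m - (j : ℕ))
            * (sgnR R (sortPerm (G ∘ j.succAbove)) * ∏ a, v a (G a)))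
        + ∑ j : Fin (m+1), ∑ G ∈ (Finset.univ.filter
              (fun G : Fin (m+1) → Fin D => Injective (G ∘ j.succAbove))).filter
              (fun G => ¬ Injective G),
            (-1 : R) ^ (m - (j : ℕ))
              * (sgnR R (sortPerm (G ∘ j.succAbove)) * ∏ a, v a (G a)) := by
        rw [Finset.sum_add_distrib]
        congr 1
        refine Finset.sum_congr rfl fun j _ => ?_
        rw [hfil j]
    _ = ∑ j : Fin (m+1), ∑ G ∈ injs (m+1) D,
          (-1 : R) ^ (m - (j : ℕ))
            * (sgnR R (sortPerm (G ∘ j.succAbove)) * ∏ a, v a (G a)) := by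
        rw [partB hm v, add_zero]
    _ = ∑ G ∈ injs (m+1) D, ∑ j : Fin (m+1),
          (-1 : R) ^ (m - (j : ℕ))
            * (sgnR R (sortPerm (G ∘ j.succAbove)) * ∏ a, v a (G a)) := Finset.sum_comm
    _ = ∑ g ∈ injs (m+1) D, sgnR R (sortPerm g) * ∏ a, v a (g a) := by
        refine Finset.sum_congr rfl fun G hG => ?_
        rw [injs, Finset.mem_filter] at hG
        have hGi : Injective G := hG.2
        have hterm : ∀ j : Fin (m+1),
            (-1 : R) ^ (m - (j : ℕ))
              * (sgnR R (sortPerm (G ∘ j.succAbove)) * ∏ a, v a (G a))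
            = (-1 : R) ^ ((((sortPerm G)⁻¹ j : Fin (m+1)) : ℕ))
              * (sgnR R (sortPerm G) * ∏ a, v a (G a)) := by
          intro j
          have h1 := sign_sortPerm_succAbove' hGi j
          have h1R : sgnR R (sortPerm (G ∘ j.succAbove))
              = (-1 : R) ^ ((j : ℕ) + (((sortPerm G)⁻¹ j : Fin (m+1)) : ℕ))
                * sgnR R (sortPerm G) := by
            have h2 := congrArg (fun z : ℤ => (z : R)) h1
            push_cast at h2
            exact h2
          rw [h1R, negpow_sub hm (Nat.lt_succ_iff.mp j.isLt), pow_add]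
          have h2 : ((-1 : R)) ^ (j : ℕ) * (-1) ^ (j : ℕ) = 1 := by
            rw [← pow_add]; exact Even.neg_one_pow ⟨_, rfl⟩
          linear_combination (sgnR R (sortPerm G) * (∏ a, v a (G a))
            * (-1 : R) ^ ((((sortPerm G)⁻¹ j : Fin (m+1)) : ℕ))) * h2
        rw [Finset.sum_congr rfl (fun j _ => hterm j), ← Finset.sum_mul]
        have h3 : ∑ j : Fin (m+1), (-1 : R) ^ ((((sortPerm G)⁻¹ j : Fin (m+1)) : ℕ)) = 1 := by
          rw [Equiv.sum_comp ((sortPerm G)⁻¹ : Equiv.Perm (Fin (m+1)))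
            (fun p : Fin (m+1) => (-1 : R) ^ ((p : ℕ)))]
          exact neg_one_sum hm
        rw [h3, one_mul]

end CoreMain


lemma eraseIdxFun_eq {m : ℕ} (s : Fin (m+1) → ℤ) (j : Fin (m+1)) :
    eraseIdxFun s j = s ∘ j.succAbove := by
  funext i
  simp only [eraseIdxFun, Function.comp_apply]
  by_cases h : (i : ℕ) < (j : ℕ)
  · rw [dif_pos h]
    congr 1
    apply Fin.ext
    rw [val_succAbove, if_pos h]
  · rw [dif_neg h]
    congr 1
    apply Fin.ext
    rw [val_succAbove, if_neg h]

lemma final {F : Type*} [Field F] (m : ℕ) (hm : Even m) (s : Fin (m+1) → ℤ) (D : ℕ) :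
    ∑ σ : Equiv.Perm (Fin (m+1)),
        (Equiv.Perm.sign σ : ℤ) • zetaTrunc (F := F) D (List.ofFn (s ∘ σ))
      = ∑ j : Fin (m+1), (-1 : RatFunc F) ^ (m - (j : ℕ)) *
          (zetaTrunc (F := F) D [s j] *
            ∑ σ : Equiv.Perm (Fin m),
              (Equiv.Perm.sign σ : ℤ) •
                zetaTrunc (F := F) D (List.ofFn ((s ∘ j.succAbove) ∘ σ))) := by
  refine Eq.trans (perm_sum_eq (m+1) s) ?_
  refine Eq.trans (core (R := RatFunc F) (D := D) hm
    (fun a e => Sd ((e : ℕ)) (s a))).symm ?_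
  refine Finset.sum_congr rfl fun j _ => ?_
  rw [zetaTrunc_single (F := F) (D := D) (s j), perm_sum_eq m (s ∘ j.succAbove)]
  rfl

end St10

theorem statement10 {F : Type*} [Field F] [Fintype F] (q : ℕ) (hq : Fintype.card F = q)
    (n : ℕ) (hodd : Odd n) (hpos : 0 < n)
    (s : Fin n → ℤ) (hinj : Function.Injective s)
    (heven : ∀ i, ((q : ℤ) - 1) ∣ s i) (D : ℕ) :
    ∑ σ : Equiv.Perm (Fin n),
        (Equiv.Perm.sign σ : ℤ) • zetaTrunc (F := F) D (List.ofFn (s ∘ σ))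
      = ∑ j : Fin n, (-1 : RatFunc F) ^ (n - 1 - (j : ℕ)) *
          (zetaTrunc (F := F) D [s j] *
            ∑ σ : Equiv.Perm (Fin (n - 1)),
              (Equiv.Perm.sign σ : ℤ) •
                zetaTrunc (F := F) D (List.ofFn (eraseIdxFun s j ∘ σ))) := by
  obtain ⟨m, rfl⟩ : ∃ m, n = m + 1 := ⟨n - 1, by omega⟩
  have hm : Even m := by
    obtain ⟨l, hl⟩ := hodd
    exact ⟨l, by omega⟩
  have herase : ∀ j : Fin (m+1), eraseIdxFun s j = s ∘ j.succAbove := St10.eraseIdxFun_eq s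
  simp only [herase]
  exact St10.final m hm s D

end
end

section
/- Let D be a finite linearly ordered set, S a set, R a commutative ring, and h : D × S → R any function. Let n be an odd positive integer and s_1, …, s_n pairwise distinct elements of S; write s = (s_1, …, s_n) and, for each j, let s^j denote the tuple obtained by omitting the j-th entry. Then Σ_{σ ∈ S_n} sgn(σ)·H(σ(s)) = Σ_{j=1}^n (−1)^{n−j} H((s_j)) · Σ_{σ ∈ S_n^j} sgn(σ)·H(σ(s^j)) in R, where S_n is the symmetric group on {1, …, n}, S_n^j is the group of permutations of {1, …, n}∖{j}, and signs are viewed in R via the canonical ring map from ℤ. -/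
/-!
STATEMENT 12: Let D be a finite linearly ordered set, S a set, R a commutative ring, and
h : D × S → R any function.  Let n be an odd positive integer and s₁, …, sₙ pairwise
distinct elements of S.  Then
Σ_{σ ∈ Sₙ} sgn(σ)·H(σ(s)) = Σ_{j=1}^n (−1)^{n−j} H((s_j)) · Σ_{σ ∈ Sₙ^j} sgn(σ)·H(σ(s^j)).
-/

noncomputable section

open scoped Classical

/-- The multiple harmonic type sum `H(s₁, …, s_r) ∈ R`, summing `h(d₁,s₁)⋯h(d_r,s_r)` over
all strictly decreasing tuples `d₁ > ⋯ > d_r` of elements of `D`. -/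
def Hsum {D S R : Type*} [LinearOrder D] [Fintype D] [CommRing R] (h : D → S → R)
    (w : List S) : R :=
  ∑ᶠ d ∈ {d : Fin w.length → D | StrictAnti d}, ∏ i, h (d i) (w.get i)

open Finset

/-- The finset of strictly antitone `r`-tuples of elements of `D`. -/
def DecT (D : Type*) [LinearOrder D] [Fintype D] (r : ℕ) : Finset (Fin r → D) :=
  Finset.univ.filter fun d => StrictAnti d

section Aux

variable {D S R : Type*} [LinearOrder D] [Fintype D] [CommRing R]

lemma Hsum_eq_sum (h : D → S → R) (w : List S) :
    Hsum h w = ∑ d ∈ DecT D w.length, ∏ i, h (d i) (w.get i) := by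
  rw [Hsum, show {d : Fin w.length → D | StrictAnti d} = ↑(DecT D w.length) by
    ext d; simp [DecT], finsum_mem_coe_finset]

lemma Hsum_eq_sum' (h : D → S → R) (w : List S) {r : ℕ} (hw : w.length = r)
    (f : Fin r → S) (hf : ∀ i : Fin r, w.get (Fin.cast hw.symm i) = f i) :
    Hsum h w = ∑ d ∈ DecT D r, ∏ i, h (d i) (f i) := by
  subst hw
  rw [Hsum_eq_sum]
  exact Finset.sum_congr rfl fun d _ => Finset.prod_congr rfl fun i _ => by
    rw [← hf i]; rfl

lemma Hsum_ofFn (h : D → S → R) {r : ℕ} (f : Fin r → S) :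
    Hsum h (List.ofFn f) = ∑ d ∈ DecT D r, ∏ i, h (d i) (f i) := by
  refine Hsum_eq_sum' h _ (List.length_ofFn (f := f)) f fun i => ?_
  simp [List.get_ofFn]

lemma Hsum_single (h : D → S → R) (x : S) : Hsum h [x] = ∑ d : D, h d x := by
  rw [Hsum_eq_sum' h [x] (r := 1) rfl (fun _ => x) (fun i => by
    have hi : (i : ℕ) = 0 := by omega
    simp [List.get_eq_getElem])]
  have h1 : DecT D 1 = Finset.univ := by
    ext d
    simp only [DecT, Finset.mem_filter, Finset.mem_univ, true_and, iff_true]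
    intro i j hij
    have hi := i.isLt
    have hj := j.isLt
    omega
  rw [h1]
  exact Fintype.sum_equiv (Equiv.funUnique (Fin 1) D) _ (fun d => h d x)
    (fun d => by simp [Equiv.funUnique])

/-- The matrix whose determinant encodes the `sign`-weighted sum of `Hsum`s. -/
def Mmat (h : D → S → R) {r : ℕ} (e : Fin r → D) (t : Fin r → S) :
    Matrix (Fin r) (Fin r) R :=
  Matrix.of fun a b => h (e b) (t a)

lemma alt_eq_det (h : D → S → R) {r : ℕ} (t : Fin r → S) :
    ∑ σ : Equiv.Perm (Fin r), (Equiv.Perm.sign σ : ℤ) • Hsum h (List.ofFn (t ∘ σ))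
      = ∑ e ∈ DecT D r, (Mmat h e t).det := by
  have hh : ∀ σ : Equiv.Perm (Fin r),
      Hsum h (List.ofFn (t ∘ σ)) = ∑ d ∈ DecT D r, ∏ i, h (d i) (t (σ i)) := fun σ =>
    Hsum_ofFn h _
  simp_rw [hh, Finset.smul_sum]
  rw [Finset.sum_comm]
  refine Finset.sum_congr rfl fun e _ => ?_
  rw [Matrix.det_apply]
  refine Finset.sum_congr rfl fun σ _ => ?_
  simp [Mmat, Units.smul_def]

lemma succAbove_val {m : ℕ} (k : Fin (m + 1)) (b : Fin m) :
    (k.succAbove b : ℕ) = if (b : ℕ) < (k : ℕ) then (b : ℕ) else (b : ℕ) + 1 := by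
  rcases lt_or_ge ((b : ℕ)) (k : ℕ) with hb | hb
  · rw [Fin.succAbove_of_castSucc_lt _ _ (by simpa [Fin.lt_def] using hb), if_pos hb]
    rfl
  · rw [Fin.succAbove_of_le_castSucc _ _ (by simpa [Fin.le_def] using hb), if_neg (by omega)]
    rfl

lemma eraseIdxFun_succAbove {α : Type*} {m : ℕ} (s : Fin (m + 1) → α) (j : Fin (m + 1))
    (i : Fin m) : eraseIdxFun s j i = s (j.succAbove i) := by
  rw [eraseIdxFun]
  split_ifs with hij
  · congr 1
    exact Fin.ext (by rw [succAbove_val]; simp [hij])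
  · congr 1
    exact Fin.ext (by rw [succAbove_val]; simp [hij])

/-- The matrix with an extra column given by `d`. -/
def Bmat (h : D → S → R) {m : ℕ} (s : Fin (m + 1) → S) (u : Fin m → D) (d : D) :
    Matrix (Fin (m + 1)) (Fin (m + 1)) R :=
  Matrix.of fun a b => h (Fin.cons (α := fun _ => D) d u b) (s a)

lemma det_Bmat (h : D → S → R) {m : ℕ} (s : Fin (m + 1) → S) (u : Fin m → D) (d : D) :
    (Bmat h s u d).det
      = ∑ a : Fin (m + 1), (-1 : R) ^ (a : ℕ) * h d (s a)
          * (Mmat h u (eraseIdxFun s a)).det := by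
  rw [Matrix.det_succ_column_zero]
  refine Finset.sum_congr rfl fun a _ => ?_
  have h0 : (Bmat h s u d) a 0 = h d (s a) := by simp [Bmat]
  have hsub : (Bmat h s u d).submatrix a.succAbove Fin.succ
      = Mmat h u (eraseIdxFun s a) := by
    ext i b
    simp [Bmat, Mmat, eraseIdxFun_succAbove, Fin.cons_succ]
  rw [h0, hsub]

lemma det_Bmat_zero (h : D → S → R) {m : ℕ} (s : Fin (m + 1) → S) (u : Fin m → D) (d : D)
    (hd : d ∈ Set.range u) : (Bmat h s u d).det = 0 := by
  obtain ⟨b, hb⟩ := hd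
  refine Matrix.det_zero_of_column_eq (i := 0) (j := b.succ) (Fin.succ_ne_zero b).symm
    fun a => ?_
  simp [Bmat, hb]

lemma count_lt_iff {m : ℕ} {u : Fin m → D} (hu : StrictAnti u) (d : D) (i : Fin m) :
    d < u i ↔ (i : ℕ) < (Finset.univ.filter fun j => d < u j).card := by
  constructor
  · intro hd
    have hsub : Finset.Iic i ⊆ Finset.univ.filter fun j => d < u j := by
      intro j hj
      simp only [Finset.mem_Iic] at hj
      simp only [Finset.mem_filter, Finset.mem_univ, true_and]
      exact lt_of_lt_of_le hd (hu.antitone hj)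
    have hcard := Finset.card_le_card hsub
    rw [Fin.card_Iic] at hcard
    omega
  · intro hc
    by_contra hd
    have hsub : (Finset.univ.filter fun j => d < u j) ⊆ Finset.Iio i := by
      intro j hj
      simp only [Finset.mem_filter, Finset.mem_univ, true_and] at hj
      simp only [Finset.mem_Iio]
      by_contra hij
      push_neg at hij
      exact hd (lt_of_lt_of_le hj (hu.antitone hij))
    have hcard := Finset.card_le_card hsub
    rw [Fin.card_Iio] at hcard
    omega

lemma card_val_lt {m c : ℕ} (hc : c ≤ m) :
    ((Finset.univ : Finset (Fin m)).filter fun i : Fin m => (i : ℕ) < c).card = c := by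
  rcases eq_or_lt_of_le hc with rfl | hlt
  · rw [Finset.filter_true_of_mem fun i _ => i.isLt, Finset.card_univ, Fintype.card_fin]
  · have h1 : ((Finset.univ : Finset (Fin m)).filter fun i : Fin m => (i : ℕ) < c)
        = Finset.Iio (⟨c, hlt⟩ : Fin m) := by
      ext j
      simp [Fin.lt_def]
    rw [h1, Fin.card_Iio]

/-- The position where `d` should be inserted into the strictly decreasing tuple `u`. -/
def idxK {m : ℕ} (u : Fin m → D) (d : D) : Fin (m + 1) :=
  ⟨(Finset.univ.filter fun j => d < u j).card,
    Nat.lt_succ_of_le ((Finset.card_filter_le _ _).trans (by simp))⟩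

lemma strictAnti_insertNth {m : ℕ} {u : Fin m → D} (hu : StrictAnti u) {d : D}
    (hd : d ∉ Set.range u) : StrictAnti ((idxK u d).insertNth d u) := by
  set k := idxK u d with hk
  have hkval : (k : ℕ) = (Finset.univ.filter fun j => d < u j).card := rfl
  intro i j hij
  rcases eq_or_ne i k with rfl | hi
  · rcases eq_or_ne j k with rfl | hj
    · exact absurd hij (lt_irrefl _)
    · obtain ⟨b, rfl⟩ := Fin.exists_succAbove_eq hj
      rw [Fin.insertNth_apply_same, Fin.insertNth_apply_succAbove]
      have hbk : ¬ ((b : ℕ) < (k : ℕ)) := by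
        have h1 := succAbove_val k b
        rw [Fin.lt_def, h1] at hij
        split_ifs at hij <;> omega
      have h2 : ¬ d < u b := fun hlt => hbk (by rw [hkval]; exact (count_lt_iff hu d b).mp hlt)
      rcases lt_or_eq_of_le (not_lt.mp h2) with h3 | h3
      · exact h3
      · exact absurd ⟨b, h3⟩ hd
  · obtain ⟨a, rfl⟩ := Fin.exists_succAbove_eq hi
    rcases eq_or_ne j k with rfl | hj
    · rw [Fin.insertNth_apply_same, Fin.insertNth_apply_succAbove]
      have hak : (a : ℕ) < (k : ℕ) := by
        have h1 := succAbove_val k a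
        rw [Fin.lt_def, h1] at hij
        split_ifs at hij <;> omega
      exact (count_lt_iff hu d a).mpr (by rw [← hkval]; exact hak)
    · obtain ⟨b, rfl⟩ := Fin.exists_succAbove_eq hj
      rw [Fin.insertNth_apply_succAbove, Fin.insertNth_apply_succAbove]
      exact hu (Fin.succAbove_lt_succAbove_iff.mp hij)

lemma idxK_eq {m : ℕ} {e : Fin (m + 1) → D} (he : StrictAnti e) (k : Fin (m + 1)) :
    idxK (e ∘ k.succAbove) (e k) = k := by
  apply Fin.ext
  show (Finset.univ.filter fun j : Fin m => e k < e (k.succAbove j)).card = (k : ℕ)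
  have h1 : (Finset.univ.filter fun j : Fin m => e k < e (k.succAbove j))
      = Finset.univ.filter fun j : Fin m => (j : ℕ) < (k : ℕ) := by
    ext j
    simp only [Finset.mem_filter, Finset.mem_univ, true_and]
    rw [he.lt_iff_gt, Fin.lt_def, succAbove_val]
    split_ifs with hh <;> omega
  rw [h1, card_val_lt (Nat.lt_succ_iff.mp k.isLt)]

lemma sum_neg_one_pow_fin {m : ℕ} (hm : Even m) :
    ∑ k : Fin (m + 1), (-1 : R) ^ (k : ℕ) = 1 := by
  rw [Fin.sum_univ_eq_sum_range (fun i => (-1 : R) ^ i) (m + 1), neg_one_geom_sum,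
    if_neg (by simp [Nat.even_add_one, hm])]

lemma neg_one_pow_sub {m j : ℕ} (hm : Even m) (hj : j ≤ m) :
    (-1 : R) ^ (m - j) = (-1 : R) ^ j := by
  have h1 : (-1 : R) ^ (m - j) * (-1 : R) ^ j = 1 := by
    rw [← pow_add, Nat.sub_add_cancel hj]
    exact hm.neg_one_pow
  have h2 : (-1 : R) ^ j * (-1 : R) ^ j = 1 := by
    rw [← pow_add]
    exact Even.neg_one_pow ⟨j, rfl⟩
  calc (-1 : R) ^ (m - j) = (-1 : R) ^ (m - j) * ((-1 : R) ^ j * (-1 : R) ^ j) := by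
        rw [h2, mul_one]
    _ = ((-1 : R) ^ (m - j) * (-1 : R) ^ j) * (-1 : R) ^ j := by ring
    _ = (-1 : R) ^ j := by rw [h1, one_mul]

lemma det_Bmat_eq (h : D → S → R) {m : ℕ} (s : Fin (m + 1) → S) (e : Fin (m + 1) → D)
    (k : Fin (m + 1)) :
    (Bmat h s (e ∘ k.succAbove) (e k)).det = (-1 : R) ^ (k : ℕ) * (Mmat h e s).det := by
  have hcol : Bmat h s (e ∘ k.succAbove) (e k)
      = (Mmat h e s).submatrix id (k.cycleRange).symm := by
    ext a b
    simp only [Bmat, Mmat, Matrix.submatrix_apply, Matrix.of_apply, id]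
    congr 1
    induction b using Fin.cases with
    | zero =>
      rw [Fin.cons_zero]
      congr 1
      rw [eq_comm, Equiv.symm_apply_eq]
      exact (Fin.cycleRange_self k).symm
    | succ c =>
      rw [Fin.cons_succ]
      show e (k.succAbove c) = _
      congr 1
      rw [eq_comm, Equiv.symm_apply_eq, Fin.cycleRange_succAbove]
  rw [hcol, Matrix.det_permute', Equiv.Perm.sign_symm, Fin.sign_cycleRange]
  norm_num


set_option maxHeartbeats 1000000 in
lemma key (h : D → S → R) {m : ℕ} (hm : Even m) (s : Fin (m + 1) → S) :
    ∑ u ∈ DecT D m, ∑ d : D, (Bmat h s u d).det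
      = ∑ e ∈ DecT D (m + 1), (Mmat h e s).det := by
  have step1 : ∀ u ∈ DecT D m, ∑ d : D, (Bmat h s u d).det
      = ∑ d ∈ Finset.univ.filter fun d => d ∉ Set.range u, (Bmat h s u d).det := by
    intro u _
    rw [← Finset.sum_filter_add_sum_filter_not Finset.univ (fun d => d ∉ Set.range u)]
    have hz : ∑ d ∈ Finset.univ.filter fun d => ¬ d ∉ Set.range u, (Bmat h s u d).det = 0 :=
      Finset.sum_eq_zero fun d hd => det_Bmat_zero h s u d (by
        simp only [Finset.mem_filter, not_not] at hd; exact hd.2)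
    rw [hz, add_zero]
  rw [Finset.sum_congr rfl step1]
  have step2 : ∀ e ∈ DecT D (m + 1), (Mmat h e s).det
      = ∑ k : Fin (m + 1), (-1 : R) ^ (k : ℕ) * (Mmat h e s).det := by
    intro e _
    rw [← Finset.sum_mul, sum_neg_one_pow_fin hm, one_mul]
  rw [Finset.sum_congr rfl step2]
  rw [Finset.sum_sigma', Finset.sum_sigma']
  refine (Finset.sum_bij'
    (fun (p : Σ _e : Fin (m + 1) → D, Fin (m + 1)) _ =>
      (⟨p.1 ∘ p.2.succAbove, p.1 p.2⟩ : Σ _u : Fin m → D, D))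
    (fun (q : Σ _u : Fin m → D, D) _ =>
      (⟨(idxK q.1 q.2).insertNth q.2 q.1, idxK q.1 q.2⟩ : Σ _e : Fin (m + 1) → D, Fin (m + 1)))
    ?_ ?_ ?_ ?_ ?_).symm
  · rintro ⟨e, k⟩ hp
    simp only [Finset.mem_sigma, Finset.mem_filter, Finset.mem_univ, true_and, DecT] at hp ⊢
    have he := hp.1
    refine ⟨he.comp_strictMono (Fin.strictMono_succAbove k), ?_⟩
    rintro ⟨b, hb⟩
    exact Fin.succAbove_ne k b (he.injective hb)
  · rintro ⟨u, d⟩ hq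
    simp only [Finset.mem_sigma, Finset.mem_filter, Finset.mem_univ, true_and, and_true,
      DecT] at hq ⊢
    exact strictAnti_insertNth hq.1 hq.2
  · rintro ⟨e, k⟩ hp
    simp only [Finset.mem_sigma, Finset.mem_filter, Finset.mem_univ, true_and, DecT] at hp
    have hk := idxK_eq hp.1 k
    refine Sigma.ext ?_ ?_
    · show (idxK (e ∘ k.succAbove) (e k)).insertNth (e k) (e ∘ k.succAbove) = e
      rw [hk]
      exact Fin.insertNth_self_removeNth k e
    · simp [hk]
  · rintro ⟨u, d⟩ hq
    refine Sigma.ext ?_ ?_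
    · show ((idxK u d).insertNth d u) ∘ (idxK u d).succAbove = u
      funext i
      exact Fin.insertNth_apply_succAbove _ _ _ _
    · simp [Fin.insertNth_apply_same]
  · rintro ⟨e, k⟩ hp
    exact (det_Bmat_eq h s e k).symm

end Aux

theorem statement12 {D S R : Type*} [LinearOrder D] [Fintype D] [CommRing R]
    (h : D → S → R) (n : ℕ) (hodd : Odd n) (hpos : 0 < n)
    (s : Fin n → S) (hinj : Function.Injective s) :
    ∑ σ : Equiv.Perm (Fin n),
        (Equiv.Perm.sign σ : ℤ) • Hsum h (List.ofFn (s ∘ σ))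
      = ∑ j : Fin n, (-1 : R) ^ (n - 1 - (j : ℕ)) *
          (Hsum h [s j] *
            ∑ σ : Equiv.Perm (Fin (n - 1)),
              (Equiv.Perm.sign σ : ℤ) • Hsum h (List.ofFn (eraseIdxFun s j ∘ σ))) := by
  obtain ⟨m, rfl⟩ : ∃ m, n = m + 1 := ⟨n - 1, by omega⟩
  have hm : Even m := by
    rcases hodd with ⟨t, ht⟩
    exact ⟨t, by omega⟩
  rw [alt_eq_det h s, ← key h hm s]
  -- rewrite the right hand side
  have hinner : ∀ j : Fin (m + 1),
      (∑ σ : Equiv.Perm (Fin (m + 1 - 1)),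
        (Equiv.Perm.sign σ : ℤ) • Hsum h (List.ofFn (eraseIdxFun s j ∘ σ)))
        = ∑ u ∈ DecT D m, (Mmat h u (eraseIdxFun s j)).det := fun j =>
    alt_eq_det h (eraseIdxFun s j)
  have hrhs : ∀ j : Fin (m + 1),
      (-1 : R) ^ (m + 1 - 1 - (j : ℕ)) *
          (Hsum h [s j] *
            ∑ σ : Equiv.Perm (Fin (m + 1 - 1)),
              (Equiv.Perm.sign σ : ℤ) • Hsum h (List.ofFn (eraseIdxFun s j ∘ σ)))
        = ∑ d : D, ∑ u ∈ DecT D m,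
            (-1 : R) ^ (j : ℕ) * h d (s j) * (Mmat h u (eraseIdxFun s j)).det := by
    intro j
    rw [hinner j, Hsum_single]
    have hexp : (m + 1 - 1 - (j : ℕ)) = m - (j : ℕ) := by omega
    rw [hexp, neg_one_pow_sub hm (Nat.lt_succ_iff.mp j.isLt)]
    rw [Finset.sum_mul, Finset.mul_sum]
    refine Finset.sum_congr rfl fun d _ => ?_
    rw [Finset.mul_sum, Finset.mul_sum]
    refine Finset.sum_congr rfl fun u _ => ?_
    ring
  rw [Finset.sum_congr rfl fun j _ => hrhs j]
  -- now both sides are triple sums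
  simp_rw [det_Bmat h s]
  rw [Finset.sum_comm]
  conv_rhs => rw [Finset.sum_comm]
  exact Finset.sum_congr rfl fun d _ => Finset.sum_comm

end
end

section
/- Let n be an odd positive integer and s_1, …, s_n pairwise distinct integers with s_i ≥ 2 for all i; write s = (s_1, …, s_n) and, for each j, let s^j denote the tuple obtained by omitting the j-th entry. Then in ℝ: Σ_{σ ∈ S_n} sgn(σ)·ζ(σ(s)) = Σ_{j=1}^n (−1)^{n−j} ζ(s_j) · Σ_{σ ∈ S_n^j} sgn(σ)·ζ(σ(s^j)), where ζ denotes the classical real multiple zeta value, S_n is the symmetric group on {1, …, n}, and S_n^j is the group of permutations of {1, …, n}∖{j}. -/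
/-!
STATEMENT 14: Let n be an odd positive integer and s₁, …, sₙ pairwise distinct integers
with sᵢ ≥ 2.  Then in ℝ:
Σ_{σ ∈ Sₙ} sgn(σ)·ζ(σ(s)) = Σ_{j=1}^n (−1)^{n−j} ζ(s_j) · Σ_{σ ∈ Sₙ^j} sgn(σ)·ζ(σ(s^j)),
where ζ is the classical real multiple zeta value.
-/

noncomputable section

open scoped Classical

/-- The classical real multiple zeta value `ζ(s₁, …, s_r) ∈ ℝ`, the sum of the convergent
series over strictly decreasing tuples `n₁ > n₂ > ⋯ > n_r ≥ 1` of positive integers. -/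
def zetaR (w : List ℤ) : ℝ :=
  ∑' d : {d : Fin w.length → ℕ // StrictAnti d ∧ ∀ i, 1 ≤ d i},
    ∏ i, ((d.1 i : ℝ)) ^ (-(w.get i))

namespace S14

open Equiv Finset Matrix

/-- Strictly decreasing positive tuples. -/
abbrev DD (r : ℕ) := {d : Fin r → ℕ // StrictAnti d ∧ ∀ i, 1 ≤ d i}

/-- Positive naturals (as subtype). -/
abbrev MM := {k : ℕ // 1 ≤ k}

/-- The summand of a multiple zeta value. -/
def PP {r : ℕ} (w : Fin r → ℤ) (d : Fin r → ℕ) : ℝ := ∏ i, (d i : ℝ) ^ (-(w i))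

lemma PP_nonneg {r : ℕ} (w : Fin r → ℤ) (d : Fin r → ℕ) : 0 ≤ PP w d :=
  Finset.prod_nonneg fun i _ => zpow_nonneg (Nat.cast_nonneg _) _

lemma summable_zpow (t : ℤ) (ht : 2 ≤ t) : Summable (fun n : ℕ => (n : ℝ) ^ (-t)) := by
  refine Summable.of_nonneg_of_le (fun n => zpow_nonneg (Nat.cast_nonneg _) _) ?_
    (Real.summable_nat_pow_inv.mpr one_lt_two)
  intro n
  rcases Nat.eq_zero_or_pos n with h | h
  · subst h
    rw [Nat.cast_zero, _root_.zero_zpow _ (by omega)]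
    positivity
  · have h1 : (1 : ℝ) ≤ (n : ℝ) := by exact_mod_cast h
    rw [_root_.zpow_neg]
    have h2 : ((n : ℝ)) ^ ((2 : ℕ) : ℤ) ≤ (n : ℝ) ^ t := by
      apply zpow_le_zpow_right₀ h1 (by omega)
    rw [← zpow_natCast (n : ℝ) 2]
    exact inv_anti₀ (by positivity) h2

lemma summable_PP : ∀ {r : ℕ} (w : Fin r → ℤ), (∀ i, 2 ≤ w i) →
    Summable (fun d : Fin r → ℕ => PP w d)
  | 0, w, _ => by
      exact Summable.of_finite
  | (r + 1), w, hw => by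
      have h1 := summable_zpow (w 0) (hw 0)
      have h2 := summable_PP (fun i => w i.succ) (fun i => hw _)
      have h3 := h1.mul_of_nonneg h2 (fun n => zpow_nonneg (Nat.cast_nonneg _) _)
        (fun d => PP_nonneg _ d)
      apply (Equiv.summable_iff (Fin.consEquiv (fun _ : Fin (r+1) => ℕ))).mp
      apply h3.congr
      intro p
      show _ = PP w (Fin.cons p.1 p.2)
      rw [PP, PP, Fin.prod_univ_succ]
      simp [PP]


lemma summable_PP_DD {r : ℕ} (w : Fin r → ℤ) (hw : ∀ i, 2 ≤ w i) :
    Summable (fun d : DD r => PP w d.1) :=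
  (summable_PP w hw).subtype {d | StrictAnti d ∧ ∀ i, 1 ≤ d i}

lemma summable_MM (x : ℤ) (hx : 2 ≤ x) : Summable (fun m : MM => (m.1 : ℝ) ^ (-x)) :=
  (summable_zpow x hx).subtype {k | 1 ≤ k}

/-- The matrix whose determinant antisymmetrizes the MZV summands. -/
def Mm {r : ℕ} (w : Fin r → ℤ) (d : Fin r → ℕ) : Matrix (Fin r) (Fin r) ℝ :=
  Matrix.of fun i j => (d i : ℝ) ^ (-(w j))

lemma sum_perm_eq_det {r : ℕ} (w : Fin r → ℤ) (d : Fin r → ℕ) :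
    ∑ σ : Equiv.Perm (Fin r), ((Equiv.Perm.sign σ : ℤ) : ℝ) * PP (w ∘ σ) d
      = (Mm w d).det := by
  rw [Matrix.det_apply]
  refine Fintype.sum_equiv (Equiv.inv (Equiv.Perm (Fin r))) _ _ fun σ => ?_
  have hp : PP (w ∘ σ) d = ∏ i, ((d (σ⁻¹ i) : ℝ)) ^ (-(w i)) := by
    rw [PP, ← Equiv.prod_comp σ (fun i => ((d (σ⁻¹ i) : ℝ)) ^ (-(w i)))]
    simp [Function.comp]
  rw [hp]
  simp [Mm, Units.smul_def, zsmul_eq_mul]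

lemma summable_det {r : ℕ} (w : Fin r → ℤ) (hw : ∀ i, 2 ≤ w i) :
    Summable (fun d : DD r => (Mm w d.1).det) := by
  refine Summable.congr (f := fun d : DD r =>
      ∑ σ : Equiv.Perm (Fin r), ((Equiv.Perm.sign σ : ℤ) : ℝ) * PP (w ∘ σ) d.1) ?_ ?_
  · exact summable_sum fun σ _ => (summable_PP_DD (w ∘ σ) (fun i => hw _)).mul_left _
  · exact fun d => sum_perm_eq_det w d.1

lemma tsum_DD_cast {a b : ℕ} (h : a = b) (w : Fin a → ℤ) (v : Fin b → ℤ)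
    (hw : ∀ i : Fin a, w i = v (Fin.cast h i)) :
    (∑' d : DD a, ∏ i, ((d.1 i : ℝ)) ^ (-(w i))) = ∑' d : DD b, PP v d.1 := by
  subst h
  have hv : w = v := funext fun i => by simpa using hw i
  subst hv
  rfl

lemma zetaR_eq {r : ℕ} (f : Fin r → ℤ) : zetaR (List.ofFn f) = ∑' d : DD r, PP f d.1 :=
  tsum_DD_cast (List.length_ofFn (f := f)) _ f (fun i => List.get_ofFn f i)

def ddOneEquiv : DD 1 ≃ MM where
  toFun d := ⟨d.1 0, d.2.2 0⟩
  invFun m := ⟨fun _ => m.1,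
    ⟨fun i j hij => absurd (Subsingleton.elim i j ▸ hij) (lt_irrefl j), fun _ => m.2⟩⟩
  left_inv d := Subtype.ext (funext fun i => by rw [Subsingleton.elim i 0])
  right_inv m := rfl

lemma zetaR_single (x : ℤ) : zetaR [x] = ∑' mv : MM, (mv.1 : ℝ) ^ (-x) := by
  have h0 : [x] = List.ofFn (fun _ : Fin 1 => x) := by simp
  rw [h0, zetaR_eq, ← Equiv.tsum_eq ddOneEquiv (fun m : MM => (m.1 : ℝ) ^ (-x))]
  refine tsum_congr fun d => ?_
  show PP (fun _ => x) d.1 = ((d.1 0 : ℕ) : ℝ) ^ (-x)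
  simp [PP]


lemma alt_sum_eq {r : ℕ} (w : Fin r → ℤ) (hw : ∀ i, 2 ≤ w i) :
    ∑ σ : Equiv.Perm (Fin r), ((Equiv.Perm.sign σ : ℤ) : ℝ) * (∑' d : DD r, PP (w ∘ σ) d.1)
      = ∑' d : DD r, (Mm w d.1).det := by
  have h2 := Summable.tsum_finsetSum (f := fun (σ : Equiv.Perm (Fin r)) (d : DD r) =>
      ((Equiv.Perm.sign σ : ℤ) : ℝ) * PP (w ∘ σ) d.1) (s := Finset.univ)
      (fun σ _ => (summable_PP_DD (w ∘ σ) (fun i => hw _)).mul_left _)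
  calc ∑ σ : Equiv.Perm (Fin r), ((Equiv.Perm.sign σ : ℤ) : ℝ) * (∑' d : DD r, PP (w ∘ σ) d.1)
      = ∑ σ : Equiv.Perm (Fin r), ∑' d : DD r, ((Equiv.Perm.sign σ : ℤ) : ℝ) * PP (w ∘ σ) d.1 :=
        Finset.sum_congr rfl fun σ _ => (tsum_mul_left).symm
    _ = ∑' d : DD r, ∑ σ : Equiv.Perm (Fin r), ((Equiv.Perm.sign σ : ℤ) : ℝ) * PP (w ∘ σ) d.1 :=
        h2.symm
    _ = ∑' d : DD r, (Mm w d.1).det := tsum_congr fun d => sum_perm_eq_det w d.1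

set_option maxHeartbeats 1000000 in
lemma summable_pair {r : ℕ} (x : ℤ) (hx : 2 ≤ x) (w : Fin r → ℤ) (hw : ∀ i, 2 ≤ w i) :
    Summable (fun p : MM × DD r => (p.1.1 : ℝ) ^ (-x) * (Mm w p.2.1).det) := by
  refine Summable.congr (f := fun p : MM × DD r => ∑ σ : Equiv.Perm (Fin r),
      ((Equiv.Perm.sign σ : ℤ) : ℝ) * ((p.1.1 : ℝ) ^ (-x) * PP (w ∘ σ) p.2.1)) ?_ ?_
  · refine summable_sum fun σ _ => Summable.mul_left _ ?_
    exact Summable.mul_of_nonneg (f := fun m : MM => (m.1 : ℝ) ^ (-x))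
      (g := fun d : DD r => PP (w ∘ σ) d.1) (summable_MM x hx)
      (summable_PP_DD (w ∘ σ) (fun i => hw _))
      (fun m => zpow_nonneg (Nat.cast_nonneg _) _) (fun d => PP_nonneg _ _)
  · intro p
    rw [← sum_perm_eq_det w p.2.1, Finset.mul_sum]
    exact Finset.sum_congr rfl fun σ _ => by ring

lemma zeta_mul_alt {r : ℕ} (x : ℤ) (hx : 2 ≤ x) (w : Fin r → ℤ) (hw : ∀ i, 2 ≤ w i) :
    (∑' mv : MM, (mv.1 : ℝ) ^ (-x)) * (∑' d : DD r, (Mm w d.1).det)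
      = ∑' p : MM × DD r, (p.1.1 : ℝ) ^ (-x) * (Mm w p.2.1).det :=
  Summable.tsum_mul_tsum (summable_MM x hx) (summable_det w hw) (summable_pair x hx w hw)


lemma erase_strictAnti {r : ℕ} {d : Fin (r+1) → ℕ} (hd : StrictAnti d) (k : Fin (r+1)) :
    StrictAnti (eraseIdxFun d k : Fin r → ℕ) := by
  intro i j hij
  have hij' : (i : ℕ) < (j : ℕ) := hij
  unfold eraseIdxFun
  split_ifs with h1 h2 h2 <;>
    first
      | exact hd (Fin.mk_lt_mk.mpr (by omega))
      | omega

lemma erase_pos {r : ℕ} {d : Fin (r+1) → ℕ} (hd : ∀ i, 1 ≤ d i) (k : Fin (r+1)) :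
    ∀ i, 1 ≤ (eraseIdxFun d k : Fin r → ℕ) i := by
  intro i
  unfold eraseIdxFun
  split_ifs <;> apply hd

/-- The "remove entry `k`" map, matching insertion of a new value into a decreasing tuple. -/
def Φ {r : ℕ} (q : Fin (r+1) × DD (r+1)) : MM × DD r :=
  (⟨q.2.1 q.1, q.2.2.2 q.1⟩,
   ⟨eraseIdxFun q.2.1 q.1, erase_strictAnti q.2.2.1 q.1, erase_pos q.2.2.2 q.1⟩)

lemma no_lt {r : ℕ} {e e' : Fin (r+1) → ℕ} (he : StrictAnti e) (he' : StrictAnti e')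
    {k k' : Fin (r+1)} (h1 : e k = e' k')
    (h2 : (eraseIdxFun e k : Fin r → ℕ) = eraseIdxFun e' k') : ¬ (k : ℕ) < (k' : ℕ) := by
  intro hlt
  have hk'r : (k' : ℕ) < r + 1 := k'.isLt
  have hkr : (k : ℕ) < r := by omega
  have h3 := congrFun h2 ⟨(k : ℕ), hkr⟩
  unfold eraseIdxFun at h3
  rw [dif_neg (by simp), dif_pos (by simpa using hlt)] at h3
  have hA : e ⟨(k : ℕ) + 1, by omega⟩ < e k := he (by rw [Fin.lt_def]; simp)
  have hB : e' k' < e' ⟨(k : ℕ), by omega⟩ := he' (by rw [Fin.lt_def]; simpa using hlt)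
  simp only [Fin.mk_lt_mk] at h3
  omega

lemma phi_inj {r : ℕ} : Function.Injective (Φ (r := r)) := by
  rintro ⟨k, e⟩ ⟨k', e'⟩ h
  have h1 : e.1 k = e'.1 k' := congrArg (fun p => p.1.1) h
  have h2 : (eraseIdxFun e.1 k : Fin r → ℕ) = eraseIdxFun e'.1 k' :=
    congrArg (fun p => p.2.1) h
  have hkk : (k : ℕ) = (k' : ℕ) := by
    rcases lt_trichotomy (k : ℕ) (k' : ℕ) with hlt | heq | hgt
    · exact absurd hlt (no_lt e.2.1 e'.2.1 h1 h2)
    · exact heq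
    · exact absurd hgt (no_lt e'.2.1 e.2.1 h1.symm h2.symm)
  have hk : k = k' := Fin.ext hkk
  subst hk
  have hee : e.1 = e'.1 := by
    funext i
    rcases lt_trichotomy (i : ℕ) (k : ℕ) with hi | hi | hi
    · have hir : (i : ℕ) < r := by have := k.isLt; omega
      have h3 := congrFun h2 ⟨(i : ℕ), hir⟩
      unfold eraseIdxFun at h3
      rw [dif_pos (by simpa using hi), dif_pos (by simpa using hi)] at h3
      simpa [Fin.eta] using h3
    · have : i = k := Fin.ext hi
      subst this; exact h1
    · have hir : (i : ℕ) - 1 < r := by have := i.isLt; omega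
      have h3 := congrFun h2 ⟨(i : ℕ) - 1, hir⟩
      unfold eraseIdxFun at h3
      rw [dif_neg (by simp; omega), dif_neg (by simp; omega)] at h3
      have hmk : (⟨(i : ℕ) - 1 + 1, by omega⟩ : Fin (r+1)) = i := Fin.ext (by simp; omega)
      rwa [hmk] at h3
  exact Prod.ext rfl (Subtype.ext hee)


/-- Insert value `mv` at position `k` into the tuple `d`. -/
def insFun {r : ℕ} (d : Fin r → ℕ) (mv k : ℕ) : Fin (r+1) → ℕ :=
  fun i => if h : (i : ℕ) < k ∧ (i : ℕ) < r then d ⟨(i : ℕ), h.2⟩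
    else if h2 : (i : ℕ) = k then mv
    else if h3 : (i : ℕ) - 1 < r then d ⟨(i : ℕ) - 1, h3⟩ else 0

lemma mem_range_phi {r : ℕ} (mv : MM) (d : DD r) (hnot : ∀ i, d.1 i ≠ mv.1) :
    (mv, d) ∈ Set.range (Φ (r := r)) := by
  obtain ⟨mv, hmv⟩ := mv
  obtain ⟨d, hd, hdpos⟩ := d
  have hex : ∃ t, ∀ i : Fin r, t ≤ (i : ℕ) → d i < mv :=
    ⟨r, fun i hi => absurd i.isLt (by omega)⟩
  set k := Nat.find hex with hkdef
  have hk : ∀ i : Fin r, k ≤ (i : ℕ) → d i < mv := Nat.find_spec hex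
  have hkr : k ≤ r := Nat.find_min' hex (fun i hi => absurd i.isLt (by omega))
  have hk2 : ∀ i : Fin r, (i : ℕ) < k → mv < d i := by
    intro i hi
    have hnp := Nat.find_min hex hi
    push_neg at hnp
    obtain ⟨i', hi', hge⟩ := hnp
    have hlt : mv < d i' := lt_of_le_of_ne hge (Ne.symm (hnot i'))
    have hle : d i' ≤ d i := hd.antitone (by rw [Fin.le_def]; exact hi')
    omega
  have hins : ∀ (i : Fin (r+1)) (h : (i : ℕ) < k), insFun d mv k i = d ⟨(i : ℕ), by omega⟩ := by
    intro i h
    rw [insFun, dif_pos ⟨h, by omega⟩]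
  have hins2 : ∀ (i : Fin (r+1)) (h : (i : ℕ) = k), insFun d mv k i = mv := by
    intro i h
    rw [insFun, dif_neg (by omega), dif_pos h]
  have hins3 : ∀ (i : Fin (r+1)) (h : k < (i : ℕ)),
      insFun d mv k i = d ⟨(i : ℕ) - 1, by have := i.isLt; omega⟩ := by
    intro i h
    rw [insFun, dif_neg (by omega), dif_neg (by omega),
      dif_pos (show (i : ℕ) - 1 < r by have := i.isLt; omega)]
  refine ⟨(⟨k, by omega⟩, ⟨insFun d mv k, ?_, ?_⟩), ?_⟩
  · intro i j hij
    have hij' : (i : ℕ) < (j : ℕ) := hij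
    have hjr := j.isLt
    have hir := i.isLt
    rcases lt_trichotomy ((i : ℕ)) k with b1 | b1 | b1 <;>
      rcases lt_trichotomy ((j : ℕ)) k with b2 | b2 | b2 <;>
      first
        | omega
        | (rw [hins i b1, hins j b2]; exact hd (Fin.mk_lt_mk.mpr (by omega)))
        | (rw [hins i b1, hins2 j b2]
           exact hk2 ⟨(i : ℕ), by omega⟩ (show (i : ℕ) < k by omega))
        | (rw [hins i b1, hins3 j b2]
           exact lt_trans (hk ⟨(j : ℕ) - 1, by omega⟩ (show k ≤ (j : ℕ) - 1 by omega))
             (hk2 ⟨(i : ℕ), by omega⟩ (show (i : ℕ) < k by omega)))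
        | (rw [hins2 i b1, hins3 j b2]
           exact hk ⟨(j : ℕ) - 1, by omega⟩ (show k ≤ (j : ℕ) - 1 by omega))
        | (rw [hins3 i b1, hins3 j b2]; exact hd (Fin.mk_lt_mk.mpr (by omega)))
  · intro i
    rcases lt_trichotomy ((i : ℕ)) k with b1 | b1 | b1
    · rw [hins i b1]; exact hdpos _
    · rw [hins2 i b1]; exact hmv
    · rw [hins3 i b1]; exact hdpos _
  · refine Prod.ext (Subtype.ext ?_) (Subtype.ext ?_)
    · show insFun d mv k ⟨k, by omega⟩ = mv
      exact hins2 _ rfl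
    · show (eraseIdxFun (insFun d mv k) ⟨k, by omega⟩ : Fin r → ℕ) = d
      funext i
      unfold eraseIdxFun
      split_ifs with h
      · simp only at h
        rw [hins _ (by simpa using h)]
        congr 1
      · simp only at h
        rw [hins3 _ (by simp; omega)]
        congr 1


set_option maxHeartbeats 800000 in
lemma snoc_perm {r : ℕ} (w : Fin (r+1) → ℤ) (e : Fin (r+1) → ℕ) (k : Fin (r+1)) :
    (Mm w (Fin.snoc (eraseIdxFun e k : Fin r → ℕ) (e k))).det
      = ((-1 : ℝ)) ^ (r - (k : ℕ)) * (Mm w e).det := by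
  set c : Equiv.Perm (Fin (r+1)) :=
    Fin.revPerm.trans ((Fin.cycleRange (Fin.rev k)).trans Fin.revPerm) with hc
  have hsign : ((Equiv.Perm.sign c.symm : ℤ) : ℝ) = ((-1 : ℝ)) ^ (r - (k : ℕ)) := by
    rw [Equiv.Perm.sign_symm]
    have h1 : c = Fin.revPerm * Fin.cycleRange (Fin.rev k) * Fin.revPerm := rfl
    rw [h1, _root_.map_mul, _root_.map_mul]
    have h2 : Equiv.Perm.sign (Fin.revPerm : Equiv.Perm (Fin (r+1)))
        * Equiv.Perm.sign (Fin.cycleRange (Fin.rev k))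
        * Equiv.Perm.sign (Fin.revPerm : Equiv.Perm (Fin (r+1)))
        = Equiv.Perm.sign (Fin.cycleRange (Fin.rev k)) := by
      rw [mul_comm, ← mul_assoc, Int.units_mul_self, one_mul]
    rw [h2, Fin.sign_cycleRange]
    have h3 : ((Fin.rev k : Fin (r+1)) : ℕ) = r - (k : ℕ) := by
      rw [Fin.val_rev]; omega
    rw [h3]
    push_cast
    norm_num
  have happly : ∀ i, (Fin.snoc (eraseIdxFun e k : Fin r → ℕ) (e k) : Fin (r+1) → ℕ) i
      = e (c.symm i) := by
    intro i
    induction i using Fin.lastCases with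
    | last =>
      have hck : c k = Fin.last r := by
        show Fin.rev (Fin.cycleRange (Fin.rev k) (Fin.rev k)) = Fin.last r
        rw [Fin.cycleRange_self, Fin.rev_zero]
      rw [show c.symm (Fin.last r) = k from (Equiv.symm_apply_eq c).mpr hck.symm, Fin.snoc_last]
    | cast i =>
      rw [Fin.snoc_castSucc]
      by_cases h : (i : ℕ) < (k : ℕ)
      · have hck : c (Fin.castSucc i) = Fin.castSucc i := by
          show Fin.rev (Fin.cycleRange (Fin.rev k) (Fin.rev (Fin.castSucc i))) = _
          rw [Fin.cycleRange_of_gt (by rw [Fin.rev_lt_rev]; exact Fin.lt_def.mpr (by simpa using h)),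
            Fin.rev_rev]
        rw [show c.symm (Fin.castSucc i) = Fin.castSucc i from (Equiv.symm_apply_eq c).mpr hck.symm]
        unfold eraseIdxFun
        rw [dif_pos (by simpa using h)]
        rfl
      · have hck : c (Fin.succ i) = Fin.castSucc i := by
          show Fin.rev (Fin.cycleRange (Fin.rev k) (Fin.rev (Fin.succ i))) = _
          have hik := i.isLt
          have hkk := k.isLt
          rw [Fin.cycleRange_of_lt (by rw [Fin.rev_lt_rev]; exact Fin.lt_def.mpr (by simp; omega))]
          apply Fin.ext
          have hv : ((Fin.rev (Fin.succ i) + 1 : Fin (r+1)) : ℕ) = (Fin.rev (Fin.succ i) : ℕ) + 1 :=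
            Fin.val_add_one_of_lt (by rw [Fin.lt_def]; simp [Fin.val_rev, Fin.val_last]; omega)
          simp only [Fin.val_rev, hv, Fin.val_succ, Fin.coe_castSucc]
          omega
        rw [show c.symm (Fin.castSucc i) = Fin.succ i from (Equiv.symm_apply_eq c).mpr hck.symm]
        unfold eraseIdxFun
        rw [dif_neg (by simpa using h)]
        rfl
  have hM : Mm w (Fin.snoc (eraseIdxFun e k : Fin r → ℕ) (e k)) = (Mm w e).submatrix c.symm id := by
    ext i j
    simp only [Mm, Matrix.submatrix_apply, Matrix.of_apply, id_eq, happly i]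
  rw [hM, Matrix.det_permute, ← hsign]


lemma phi_vanish {r : ℕ} (w : Fin (r+1) → ℤ) (p : MM × DD r) (hp : p ∉ Set.range (Φ (r := r))) :
    (Mm w (Fin.snoc p.2.1 p.1.1)).det = 0 := by
  by_cases hcase : ∀ i, p.2.1 i ≠ p.1.1
  · exact absurd (by simpa using mem_range_phi p.1 p.2 hcase) hp
  · push_neg at hcase
    obtain ⟨i, hi⟩ := hcase
    refine Matrix.det_zero_of_row_eq (i := Fin.castSucc i) (j := Fin.last r)
      (Fin.ne_of_lt (Fin.castSucc_lt_last i)) ?_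
    funext j
    simp only [Mm, Matrix.of_apply, Fin.snoc_castSucc, Fin.snoc_last, hi]

lemma erase_succAbove {r : ℕ} (s : Fin (r+1) → ℤ) (j : Fin (r+1)) (i : Fin r) :
    (eraseIdxFun s j : Fin r → ℤ) i = s (j.succAbove i) := by
  unfold eraseIdxFun
  split_ifs with h
  · rw [Fin.succAbove_of_castSucc_lt _ _ (Fin.lt_def.mpr (by simpa using h))]
    rfl
  · rw [Fin.succAbove_of_le_castSucc _ _ (Fin.le_def.mpr (by simp; omega))]
    rfl

lemma neg_one_pow_add_eq_sub {a b : ℕ} (h : b ≤ a) : ((-1 : ℝ)) ^ (a + b) = (-1 : ℝ) ^ (a - b) := by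
  obtain ⟨c, rfl⟩ := Nat.exists_eq_add_of_le h
  have h1 : b + c + b = c + 2 * b := by ring
  have h2 : b + c - b = c := by omega
  rw [h1, h2, pow_add, pow_mul, neg_one_sq, one_pow, mul_one]

lemma cofactor {r : ℕ} (s : Fin (r+1) → ℤ) (d : Fin r → ℕ) (mv : ℕ) :
    (Mm s (Fin.snoc d mv)).det
      = ∑ j : Fin (r+1), (-1 : ℝ) ^ (r - (j : ℕ))
          * ((mv : ℝ) ^ (-(s j)) * (Mm (eraseIdxFun s j : Fin r → ℤ) d).det) := by
  rw [Matrix.det_succ_row _ (Fin.last r)]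
  refine Finset.sum_congr rfl fun j _ => ?_
  have hsub : (Mm s (Fin.snoc d mv)).submatrix (Fin.last r).succAbove j.succAbove
      = Mm (eraseIdxFun s j : Fin r → ℤ) d := by
    ext a b
    simp only [Matrix.submatrix_apply, Fin.succAbove_last, Mm, Matrix.of_apply,
      Fin.snoc_castSucc]
    rw [← erase_succAbove s j b]
  have hentry : Mm s (Fin.snoc d mv) (Fin.last r) j = (mv : ℝ) ^ (-(s j)) := by
    simp only [Mm, Matrix.of_apply, Fin.snoc_last]
  rw [hsub, hentry, Fin.val_last, neg_one_pow_add_eq_sub (by omega), mul_assoc]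

lemma summable_prod_left {ι β : Type*} [Fintype ι] {f : ι × β → ℝ}
    (h : ∀ k, Summable (fun b => f (k, b))) : Summable f := by
  have hf : f = fun q => ∑ k : ι, if q.1 = k then f (k, q.2) else 0 := by
    funext q
    simp
  rw [hf]
  refine summable_sum fun k _ => ?_
  have hinj : Function.Injective (fun b : β => ((k, b) : ι × β)) := by
    intro a b hab
    simpa using hab
  refine (Function.Injective.summable_iff hinj ?_).mp ?_
  · intro q hq
    have : q.1 ≠ k := fun hqk => hq ⟨q.2, by rw [← hqk]⟩
    simp [this]
  · exact (h k).congr fun b => by simp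

lemma sum_neg_one_pow (r : ℕ) (hr : Even r) :
    ∑ k : Fin (r+1), ((-1 : ℝ)) ^ (r - (k : ℕ)) = 1 := by
  rw [Fin.sum_univ_eq_sum_range (fun k => ((-1 : ℝ)) ^ (r - k)) (r+1),
    ← Finset.sum_range_reflect]
  have h1 : ∀ j ∈ Finset.range (r+1), ((-1 : ℝ)) ^ (r - (r + 1 - 1 - j)) = (-1 : ℝ) ^ j := by
    intro j hj
    rw [Finset.mem_range] at hj
    congr 1
    omega
  rw [Finset.sum_congr rfl h1, neg_one_geom_sum, if_neg]
  rw [Nat.even_add_one]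
  exact fun hcon => hcon hr


set_option maxHeartbeats 1000000 in
lemma core {r : ℕ} (hr : Even r) (s : Fin (r+1) → ℤ) (hs : ∀ i, 2 ≤ s i) :
    ∑' p : MM × DD r, (Mm s (Fin.snoc p.2.1 p.1.1)).det
      = ∑' e : DD (r+1), (Mm s e.1).det := by
  have h1 : ∑' q : Fin (r+1) × DD (r+1), (Mm s (Fin.snoc ((Φ q).2.1) ((Φ q).1.1))).det
      = ∑' p : MM × DD r, (Mm s (Fin.snoc p.2.1 p.1.1)).det := by
    refine Function.Injective.tsum_eq phi_inj
      (f := fun p : MM × DD r => (Mm s (Fin.snoc p.2.1 p.1.1)).det) ?_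
    intro p hps
    by_contra hnr
    exact hps (phi_vanish s p hnr)
  have h2 : ∀ q : Fin (r+1) × DD (r+1),
      (Mm s (Fin.snoc ((Φ q).2.1) ((Φ q).1.1))).det
        = (-1 : ℝ) ^ (r - (q.1 : ℕ)) * (Mm s q.2.1).det :=
    fun q => snoc_perm s q.2.1 q.1
  have hsummable : Summable
      (fun q : Fin (r+1) × DD (r+1) => (-1 : ℝ) ^ (r - (q.1 : ℕ)) * (Mm s q.2.1).det) :=
    summable_prod_left fun k => ((summable_det s hs).mul_left ((-1 : ℝ) ^ (r - (k : ℕ))) :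
      Summable (fun e : DD (r+1) => (-1 : ℝ) ^ (r - (k : ℕ)) * (Mm s e.1).det))
  calc ∑' p : MM × DD r, (Mm s (Fin.snoc p.2.1 p.1.1)).det
      = ∑' q : Fin (r+1) × DD (r+1), (Mm s (Fin.snoc ((Φ q).2.1) ((Φ q).1.1))).det := h1.symm
    _ = ∑' q : Fin (r+1) × DD (r+1), (-1 : ℝ) ^ (r - (q.1 : ℕ)) * (Mm s q.2.1).det :=
        tsum_congr h2
    _ = ∑' k : Fin (r+1), ∑' e : DD (r+1), (-1 : ℝ) ^ (r - (k : ℕ)) * (Mm s e.1).det :=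
        by exact Summable.tsum_prod' hsummable (fun k => ((summable_det s hs).mul_left ((-1 : ℝ) ^ (r - (k : ℕ))) :
          Summable (fun e : DD (r+1) => (-1 : ℝ) ^ (r - (k : ℕ)) * (Mm s e.1).det)))
    _ = ∑ k : Fin (r+1), ∑' e : DD (r+1), (-1 : ℝ) ^ (r - (k : ℕ)) * (Mm s e.1).det :=
        tsum_fintype _
    _ = ∑ k : Fin (r+1), (-1 : ℝ) ^ (r - (k : ℕ)) * ∑' e : DD (r+1), (Mm s e.1).det :=
        Finset.sum_congr rfl fun k _ => tsum_mul_left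
    _ = (∑ k : Fin (r+1), (-1 : ℝ) ^ (r - (k : ℕ))) * ∑' e : DD (r+1), (Mm s e.1).det :=
        (Finset.sum_mul _ _ _).symm
    _ = ∑' e : DD (r+1), (Mm s e.1).det := by rw [sum_neg_one_pow r hr, one_mul]

end S14

theorem statement14 (n : ℕ) (hodd : Odd n) (hpos : 0 < n)
    (s : Fin n → ℤ) (hs2 : ∀ i, 2 ≤ s i) (hinj : Function.Injective s) :
    ∑ σ : Equiv.Perm (Fin n),
        (Equiv.Perm.sign σ : ℤ) • zetaR (List.ofFn (s ∘ σ))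
      = ∑ j : Fin n, (-1 : ℝ) ^ (n - 1 - (j : ℕ)) *
          (zetaR [s j] *
            ∑ σ : Equiv.Perm (Fin (n - 1)),
              (Equiv.Perm.sign σ : ℤ) • zetaR (List.ofFn (eraseIdxFun s j ∘ σ))) := by
  obtain ⟨m, rfl⟩ := Nat.exists_eq_succ_of_ne_zero hpos.ne'
  have hm : Even m := by
    rcases hodd with ⟨c, hc⟩
    exact ⟨c, by omega⟩
  have hw : ∀ (j : Fin (m+1)) (i : Fin m), 2 ≤ (eraseIdxFun s j : Fin m → ℤ) i := by
    intro j i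
    unfold eraseIdxFun
    split_ifs <;> apply hs2
  open S14 in
  have hXY : ∀ j : Fin (m+1),
      (zetaR [s j] * ∑ σ : Equiv.Perm (Fin (m+1-1)),
          (Equiv.Perm.sign σ : ℤ) • zetaR (List.ofFn (eraseIdxFun s j ∘ σ)))
        = ∑' p : MM × DD m,
            ((p.1.1 : ℝ) ^ (-(s j)) * (Mm (eraseIdxFun s j : Fin m → ℤ) p.2.1).det) := by
    intro j
    have e2 : (∑ σ : Equiv.Perm (Fin (m+1-1)),
        (Equiv.Perm.sign σ : ℤ) • zetaR (List.ofFn (eraseIdxFun s j ∘ σ)))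
        = ∑ σ : Equiv.Perm (Fin m), ((Equiv.Perm.sign σ : ℤ) : ℝ)
            * (∑' d : DD m, PP ((eraseIdxFun s j : Fin m → ℤ) ∘ σ) d.1) :=
      Finset.sum_congr rfl (fun σ _ => by rw [zsmul_eq_mul, zetaR_eq]; exact rfl)
    rw [zetaR_single, e2, alt_sum_eq (r := m) (eraseIdxFun s j) (hw j)]
    exact zeta_mul_alt (r := m) (s j) (hs2 j) _ (hw j)
  open S14 in
  calc (∑ σ : Equiv.Perm (Fin (m+1)),
        (Equiv.Perm.sign σ : ℤ) • zetaR (List.ofFn (s ∘ σ)))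
      = ∑ σ : Equiv.Perm (Fin (m+1)), ((Equiv.Perm.sign σ : ℤ) : ℝ)
          * (∑' d : DD (m+1), PP (s ∘ σ) d.1) :=
        Finset.sum_congr rfl (fun σ _ => by rw [zsmul_eq_mul, zetaR_eq])
    _ = ∑' e : DD (m+1), (Mm s e.1).det := alt_sum_eq s hs2
    _ = ∑' p : MM × DD m, (Mm s (Fin.snoc p.2.1 p.1.1)).det := (core hm s hs2).symm
    _ = ∑' p : MM × DD m, ∑ j : Fin (m+1), (-1 : ℝ) ^ (m - (j : ℕ))
          * ((p.1.1 : ℝ) ^ (-(s j)) * (Mm (eraseIdxFun s j : Fin m → ℤ) p.2.1).det) :=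
        tsum_congr fun p => cofactor s p.2.1 p.1.1
    _ = ∑ j : Fin (m+1), ∑' p : MM × DD m, (-1 : ℝ) ^ (m - (j : ℕ))
          * ((p.1.1 : ℝ) ^ (-(s j)) * (Mm (eraseIdxFun s j : Fin m → ℤ) p.2.1).det) :=
        Summable.tsum_finsetSum (fun j _ => (summable_pair (s j) (hs2 j) _ (hw j)).mul_left _)
    _ = ∑ j : Fin (m+1), (-1 : ℝ) ^ (m - (j : ℕ))
          * ∑' p : MM × DD m,
              ((p.1.1 : ℝ) ^ (-(s j)) * (Mm (eraseIdxFun s j : Fin m → ℤ) p.2.1).det) :=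
        Finset.sum_congr rfl fun j _ => tsum_mul_left
    _ = ∑ j : Fin (m+1), (-1 : ℝ) ^ (m + 1 - 1 - (j : ℕ)) *
          (zetaR [s j] *
            ∑ σ : Equiv.Perm (Fin (m + 1 - 1)),
              (Equiv.Perm.sign σ : ℤ) • zetaR (List.ofFn (eraseIdxFun s j ∘ σ))) := by
        refine Finset.sum_congr rfl fun j _ => ?_
        rw [hXY j]
        exact rfl








end
end

section
/- Let n be an odd positive integer and s_1, …, s_n pairwise distinct nonzero integers. Then Σ_{σ ∈ S_n} sgn(σ)·Z^𝒜(σ(s)) = 0 in 𝒜; that is, for all but finitely many primes p, Σ_{σ ∈ S_n} sgn(σ)·Z_p(s_{σ(1)}, …, s_{σ(n)}) = 0 in 𝔽_p, where sgn(σ) ∈ {±1} is viewed in 𝔽_p via the canonical ring map from ℤ. -/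
/-!
STATEMENT 15: Let n be an odd positive integer and s₁, …, sₙ pairwise distinct nonzero
integers.  Then for all but finitely many primes p,
Σ_{σ ∈ Sₙ} sgn(σ)·Z_p(s_{σ(1)}, …, s_{σ(n)}) = 0 in 𝔽_p.
-/

noncomputable section

open scoped Classical

/-- The finite multiple zeta value mod `p`:
`Z_p(s₁, …, s_r) = Σ_{p > n₁ > ⋯ > n_r ≥ 1} n₁^{−s₁}⋯n_r^{−s_r} ∈ 𝔽_p`, the (possibly
negative) powers being computed in the field `𝔽_p = ZMod p`. -/
def Zp (p : ℕ) (hp : p.Prime) (w : List ℤ) : ZMod p :=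
  letI : Fact p.Prime := ⟨hp⟩
  ∑ᶠ d ∈ {d : Fin w.length → ℕ | StrictAnti d ∧ ∀ i, 1 ≤ d i ∧ d i < p},
    ∏ i, ((d i : ZMod p)) ^ (-(w.get i))

namespace Statement15Aux

open Finset Equiv
/-- Strictly decreasing `r`-tuples with entries in `[1, b)`. -/
def chainFinset (r b : ℕ) : Finset (Fin r → ℕ) :=
  (Fintype.piFinset fun _ : Fin r => Finset.range b).filter
    fun d => StrictAnti d ∧ ∀ i, 1 ≤ d i ∧ d i < b

lemma mem_chainFinset {r b : ℕ} {d : Fin r → ℕ} :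
    d ∈ chainFinset r b ↔ StrictAnti d ∧ ∀ i, 1 ≤ d i ∧ d i < b := by
  simp only [chainFinset, Finset.mem_filter, Fintype.mem_piFinset, Finset.mem_range]
  exact ⟨fun h => h.2, fun h => ⟨fun i => (h.2 i).2, h⟩⟩

lemma chainSet_eq (r b : ℕ) :
    {d : Fin r → ℕ | StrictAnti d ∧ ∀ i, 1 ≤ d i ∧ d i < b} = ↑(chainFinset r b) := by
  ext d
  simp [mem_chainFinset, Set.mem_setOf_eq]

lemma Zp_eq_sum (p : ℕ) [hp : Fact p.Prime] (w : List ℤ) {m : ℕ} (h : w.length = m) :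
    Zp p hp.out w = ∑ d ∈ chainFinset m p,
      ∏ i : Fin m, ((d i : ZMod p)) ^ (-(w.get (Fin.cast h.symm i))) := by
  subst h
  rw [Zp, chainSet_eq, finsum_mem_coe_finset]
  rfl

lemma Zp_ofFn (p : ℕ) [hp : Fact p.Prime] {m : ℕ} (f : Fin m → ℤ) :
    Zp p hp.out (List.ofFn f) = ∑ d ∈ chainFinset m p,
      ∏ i : Fin m, ((d i : ZMod p)) ^ (-(f i)) := by
  rw [Zp_eq_sum p _ (List.length_ofFn (f := f))]
  refine Finset.sum_congr rfl fun d _ => Finset.prod_congr rfl fun i _ => ?_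
  simp [List.get_ofFn]



open Finset Equiv

lemma card_filter_val_lt (m t : ℕ) (ht : t ≤ m) :
    #(Finset.univ.filter fun i : Fin m => (i : ℕ) < t) = t := by
  classical
  have h : (Finset.univ.filter fun i : Fin m => (i : ℕ) < t)
      = (Finset.range t).attachFin (fun x hx => lt_of_lt_of_le (Finset.mem_range.mp hx) ht) := by
    ext i
    simp [Finset.mem_attachFin]
  rw [h, Finset.card_attachFin, Finset.card_range]

/-- The position at which `x` must be inserted in the strictly decreasing tuple `d`. -/
def insPos {m : ℕ} (x : ℕ) (d : Fin m → ℕ) : Fin (m + 1) :=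
  ⟨#(Finset.univ.filter fun i => x < d i),
    Nat.lt_succ_of_le (le_trans (Finset.card_filter_le _ _) (by simp))⟩

lemma lt_insPos_iff {m : ℕ} {x : ℕ} {d : Fin m → ℕ} (hd : StrictAnti d) (i : Fin m) :
    x < d i ↔ (i : ℕ) < (insPos x d : ℕ) := by
  classical
  constructor
  · intro h
    have hsub : Finset.Iic i ⊆ Finset.univ.filter fun i' => x < d i' := by
      intro i' hi'
      simp only [Finset.mem_filter, Finset.mem_univ, true_and]
      exact lt_of_lt_of_le h (hd.antitone (Finset.mem_Iic.mp hi'))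
    have hc := Finset.card_le_card hsub
    rw [Fin.card_Iic] at hc
    exact Nat.lt_of_succ_le hc
  · intro h
    by_contra hcon
    have hsub : (Finset.univ.filter fun i' => x < d i') ⊆ Finset.Iio i := by
      intro i' hi'
      simp only [Finset.mem_filter, Finset.mem_univ, true_and] at hi'
      rw [Finset.mem_Iio]
      by_contra hge
      exact hcon (lt_of_lt_of_le hi' (hd.antitone (not_lt.mp hge)))
    have hc := Finset.card_le_card hsub
    rw [Fin.card_Iio] at hc
    exact absurd h (not_lt.mpr hc)

lemma strictAnti_insertNth {m : ℕ} {d : Fin m → ℕ} (hd : StrictAnti d) {x : ℕ}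
    (hne : ∀ i, d i ≠ x) : StrictAnti (Fin.insertNth (insPos x d) x d) := by
  intro j1 j2 hlt
  rcases eq_or_ne j1 (insPos x d) with rfl | h1
  · rcases eq_or_ne j2 (insPos x d) with rfl | h2
    · exact absurd hlt (lt_irrefl _)
    · obtain ⟨i, rfl⟩ := Fin.exists_succAbove_eq h2
      rw [Fin.insertNth_apply_same, Fin.insertNth_apply_succAbove]
      have hk_le : ((insPos x d : ℕ)) ≤ (i : ℕ) := by
        have := (Fin.lt_succAbove_iff_le_castSucc (insPos x d) i).mp hlt
        simpa [Fin.le_def] using this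
      have hnot : ¬ x < d i := by
        rw [lt_insPos_iff hd]
        omega
      exact lt_of_le_of_ne (not_lt.mp hnot) (hne i)
  · obtain ⟨i1, rfl⟩ := Fin.exists_succAbove_eq h1
    rcases eq_or_ne j2 (insPos x d) with rfl | h2
    · rw [Fin.insertNth_apply_same, Fin.insertNth_apply_succAbove]
      have : (i1 : ℕ) < ((insPos x d : ℕ)) := by
        have := (Fin.succAbove_lt_iff_castSucc_lt (insPos x d) i1).mp hlt
        simpa [Fin.lt_def] using this
      exact (lt_insPos_iff hd i1).mpr this
    · obtain ⟨i2, rfl⟩ := Fin.exists_succAbove_eq h2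
      rw [Fin.insertNth_apply_succAbove, Fin.insertNth_apply_succAbove]
      exact hd ((Fin.strictMono_succAbove (insPos x d)).lt_iff_lt.mp hlt)

lemma insPos_removeNth {m : ℕ} {e : Fin (m+1) → ℕ} (he : StrictAnti e) (k : Fin (m+1)) :
    insPos (e k) (k.removeNth e) = k := by
  classical
  apply Fin.ext
  show #(Finset.univ.filter fun i => e k < k.removeNth e i) = (k : ℕ)
  have hiff : ∀ i : Fin m, (e k < k.removeNth e i) ↔ ((i : ℕ) < (k : ℕ)) := by
    intro i
    show e k < e (k.succAbove i) ↔ _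
    rw [he.lt_iff_gt, Fin.succAbove_lt_iff_castSucc_lt]
    simp [Fin.lt_def]
  simp only [hiff]
  exact card_filter_val_lt m (k : ℕ) (Nat.lt_succ_iff.mp k.isLt)

lemma sum_range_neg_one_pow (t : ℕ) : ∑ k ∈ Finset.range (2*t+1), ((-1:ℤ))^k = 1 := by
  induction t with
  | zero => simp
  | succ u ih =>
    rw [show 2*(u+1)+1 = (2*u+1)+1+1 by ring, Finset.sum_range_succ, Finset.sum_range_succ, ih]
    have h1 : ((-1:ℤ))^(2*u+1) = -1 := Odd.neg_one_pow ⟨u, by ring⟩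
    have h2 : ((-1:ℤ))^(2*u+1+1) = 1 := Even.neg_one_pow ⟨u+1, by ring⟩
    rw [h1, h2]; ring



lemma sum_zpow_eq_zero {p : ℕ} [hpf : Fact p.Prime] {c : ℤ} (hc : c ≠ 0)
    (hlt : c.natAbs < p - 1) :
    ∑ x ∈ Finset.Ico 1 p, ((x : ZMod p)) ^ c = 0 := by
  have hp : p.Prime := hpf.out
  have hcast : ∑ x ∈ Finset.Ico 1 p, ((x : ZMod p)) ^ c = ∑ u : (ZMod p)ˣ, ((u : ZMod p)) ^ c := by
    symm
    refine Finset.sum_bij' (i := fun (u : (ZMod p)ˣ) (_ : u ∈ Finset.univ) => ((u : ZMod p)).val)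
      (j := fun x hx => ZMod.unitOfCoprime x (Nat.Coprime.symm (hp.coprime_iff_not_dvd.mpr
        (Nat.not_dvd_of_pos_of_lt (Finset.mem_Ico.mp hx).1 (Finset.mem_Ico.mp hx).2))))
      ?_ ?_ ?_ ?_ ?_
    · intro u _
      refine Finset.mem_Ico.mpr ⟨?_, ZMod.val_lt _⟩
      exact Nat.pos_of_ne_zero fun h => Units.ne_zero u ((ZMod.val_eq_zero _).mp h)
    · intro x hx
      exact Finset.mem_univ _
    · intro u _
      apply Units.ext
      simp [ZMod.coe_unitOfCoprime, ZMod.natCast_val, ZMod.cast_id]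
    · intro x hx
      simp [ZMod.coe_unitOfCoprime, ZMod.val_cast_of_lt (Finset.mem_Ico.mp hx).2]
    · intro u _
      rw [ZMod.natCast_val, ZMod.cast_id]
  rw [hcast]
  have hne : ((Units.coeHom (ZMod p)).comp (zpowGroupHom c) : (ZMod p)ˣ →* ZMod p) ≠ 1 := by
    intro hcontra
    obtain ⟨g, hg⟩ := IsCyclic.exists_generator (α := (ZMod p)ˣ)
    have hord : orderOf g = p - 1 := by
      rw [orderOf_eq_card_of_forall_mem_zpowers hg, Nat.card_eq_fintype_card, ZMod.card_units]
    have hg1 : g ^ c = 1 := by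
      have h1 : ((Units.coeHom (ZMod p)).comp (zpowGroupHom c)) g = 1 := by rw [hcontra]; rfl
      have h2 : ((g ^ c : (ZMod p)ˣ) : ZMod p) = 1 := h1
      exact Units.ext (by simpa using h2)
    have hdvd : ((p - 1 : ℕ) : ℤ) ∣ c := by
      rw [← hord]
      exact orderOf_dvd_iff_zpow_eq_one.mpr hg1
    have hle : ((p - 1 : ℕ) : ℤ) ≤ |c| := Int.le_of_dvd (abs_pos.mpr hc) ((dvd_abs _ _).mpr hdvd)
    rw [Int.abs_eq_natAbs] at hle
    have : p - 1 ≤ c.natAbs := by exact_mod_cast hle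
    omega
  have := sum_hom_units_eq_zero ((Units.coeHom (ZMod p)).comp (zpowGroupHom c)) hne
  rw [← this]
  refine Finset.sum_congr rfl fun u _ => ?_
  show (u : ZMod p) ^ c = ((u ^ c : (ZMod p)ˣ) : ZMod p)
  simp


set_option maxHeartbeats 1000000 in
theorem key {R : Type} [CommRing R] (b m : ℕ) (hm : Even m) (g : Fin (m+1) → ℕ → R)
    (hg0 : ∀ j, ∑ x ∈ Finset.Ico 1 b, g j x = 0) :
    ∑ σ : Equiv.Perm (Fin (m+1)), (Equiv.Perm.sign σ : ℤ) •
      ∑ e ∈ chainFinset (m+1) b, ∏ j, g (σ j) (e j) = 0 := by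
  classical
  set X := Finset.Ico 1 b with hX
  set D0 := chainFinset m b with hD0
  set D1 := chainFinset (m+1) b with hD1
  set F : Equiv.Perm (Fin (m+1)) → ℕ → (Fin m → ℕ) → R :=
    fun σ x d => (Equiv.Perm.sign σ : ℤ) • (g (σ 0) x * ∏ i, g (σ i.succ) (d i)) with hF
  set Φ : R := ∑ e ∈ D1, ∑ σ : Equiv.Perm (Fin (m+1)),
    (Equiv.Perm.sign σ : ℤ) • ∏ j, g (σ j) (e j) with hΦ
  have hgoal : ∑ σ : Equiv.Perm (Fin (m+1)), (Equiv.Perm.sign σ : ℤ) •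
      ∑ e ∈ D1, ∏ j, g (σ j) (e j) = Φ := by
    rw [hΦ]
    simp only [Finset.smul_sum]
    exact Finset.sum_comm
  -- total sum is zero
  have htot : ∑ σ : Equiv.Perm (Fin (m+1)), ∑ z ∈ X ×ˢ D0, F σ z.1 z.2 = 0 := by
    refine Finset.sum_eq_zero fun σ _ => ?_
    calc ∑ z ∈ X ×ˢ D0, F σ z.1 z.2
        = (Equiv.Perm.sign σ : ℤ) •
            ∑ z ∈ X ×ˢ D0, (g (σ 0) z.1 * ∏ i, g (σ i.succ) (z.2 i)) := by
          simp only [hF]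
          rw [← Finset.smul_sum]
      _ = (Equiv.Perm.sign σ : ℤ) •
            ((∑ x ∈ X, g (σ 0) x) * ∑ d ∈ D0, ∏ i, g (σ i.succ) (d i)) := by
          rw [Finset.sum_product, Finset.sum_mul_sum]
      _ = 0 := by rw [hg0, zero_mul, smul_zero]
  -- contraction part vanishes
  have heq : ∑ σ : Equiv.Perm (Fin (m+1)),
      ∑ z ∈ (X ×ˢ D0).filter (fun z => ∃ k, z.2 k = z.1), F σ z.1 z.2 = 0 := by
    rw [Finset.sum_comm]
    refine Finset.sum_eq_zero fun z hz => ?_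
    obtain ⟨hzmem, k, hk⟩ : (z ∈ X ×ˢ D0) ∧ ∃ k, z.2 k = z.1 := by
      simpa using Finset.mem_filter.mp hz
    refine Finset.sum_involution (fun σ _ => σ * Equiv.swap 0 k.succ) ?_ ?_
      (fun σ _ => Finset.mem_univ _) ?_
    · intro σ _
      have hsw0 : (σ * Equiv.swap (0:Fin (m+1)) k.succ) 0 = σ k.succ := by
        rw [Equiv.Perm.mul_apply, Equiv.swap_apply_left]
      have hswk : (σ * Equiv.swap (0:Fin (m+1)) k.succ) k.succ = σ 0 := by
        rw [Equiv.Perm.mul_apply, Equiv.swap_apply_right]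
      have hswi : ∀ i : Fin m, i ≠ k →
          (σ * Equiv.swap (0:Fin (m+1)) k.succ) i.succ = σ i.succ := by
        intro i hik
        rw [Equiv.Perm.mul_apply, Equiv.swap_apply_of_ne_of_ne (Fin.succ_ne_zero i)
          (fun hcontra => hik (Fin.succ_injective m hcontra))]
      have hprod : g ((σ * Equiv.swap (0:Fin (m+1)) k.succ) 0) z.1 *
          ∏ i, g ((σ * Equiv.swap (0:Fin (m+1)) k.succ) i.succ) (z.2 i)
          = g (σ 0) z.1 * ∏ i, g (σ i.succ) (z.2 i) := by
        rw [Fintype.prod_eq_mul_prod_compl k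
            (fun i => g ((σ * Equiv.swap (0:Fin (m+1)) k.succ) i.succ) (z.2 i)),
          Fintype.prod_eq_mul_prod_compl k (fun i => g (σ i.succ) (z.2 i))]
        have hcompl : ∏ i ∈ ({k}ᶜ : Finset (Fin m)),
            g ((σ * Equiv.swap (0:Fin (m+1)) k.succ) i.succ) (z.2 i)
            = ∏ i ∈ ({k}ᶜ : Finset (Fin m)), g (σ i.succ) (z.2 i) :=
          Finset.prod_congr rfl fun i hi => by rw [hswi i (by simpa using hi)]
        rw [hcompl, hsw0, hswk, hk]
        ring
      have hsign : ((Equiv.Perm.sign (σ * Equiv.swap (0:Fin (m+1)) k.succ) : ℤˣ) : ℤ)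
          = -((Equiv.Perm.sign σ : ℤˣ) : ℤ) := by
        rw [Equiv.Perm.sign_mul, Equiv.Perm.sign_swap (Fin.succ_ne_zero k).symm]
        simp
      simp only [hF]
      rw [hprod, hsign, neg_smul]
      exact add_neg_cancel _
    · intro σ _ _ hcontra
      have hswap1 : Equiv.swap (0:Fin (m+1)) k.succ = 1 :=
        mul_left_cancel (a := σ) (by rw [mul_one]; exact hcontra)
      exact Fin.succ_ne_zero k ((Equiv.swap_eq_one_iff.mp hswap1).symm)
    · intro σ _
      show σ * Equiv.swap (0:Fin (m+1)) k.succ * Equiv.swap (0:Fin (m+1)) k.succ = σ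
      rw [mul_assoc, Equiv.swap_mul_self, mul_one]
  -- per-(k,e) reindexing
  have hper : ∀ (k : Fin (m+1)) (e : Fin (m+1) → ℕ),
      (∑ σ : Equiv.Perm (Fin (m+1)), F σ (e k) (k.removeNth e))
        = ((-1 : ℤ))^(k:ℕ) • ∑ σ : Equiv.Perm (Fin (m+1)),
            (Equiv.Perm.sign σ : ℤ) • ∏ j, g (σ j) (e j) := by
    intro k e
    have hterm : ∀ σ : Equiv.Perm (Fin (m+1)),
        g (σ 0) (e k) * ∏ i, g (σ i.succ) (k.removeNth e i)
          = ∏ j, g ((σ * k.cycleRange) j) (e j) := by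
      intro σ
      rw [Fin.prod_univ_succAbove (fun j => g ((σ * k.cycleRange) j) (e j)) k]
      congr 1
      · rw [Equiv.Perm.mul_apply, Fin.cycleRange_self]
      · refine Finset.prod_congr rfl fun i _ => ?_
        rw [Equiv.Perm.mul_apply, Fin.cycleRange_succAbove]
        rfl
    have hsq : ((-1:ℤ))^(k:ℕ) * ((-1:ℤ))^(k:ℕ) = 1 := by
      rw [← pow_add]
      exact Even.neg_one_pow ⟨(k:ℕ), rfl⟩
    calc (∑ σ : Equiv.Perm (Fin (m+1)), F σ (e k) (k.removeNth e))
        = ∑ σ : Equiv.Perm (Fin (m+1)), ((-1:ℤ))^(k:ℕ) •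
            (((Equiv.Perm.sign (σ * k.cycleRange) : ℤˣ)):ℤ) • ∏ j, g ((σ * k.cycleRange) j) (e j) := by
          refine Finset.sum_congr rfl fun σ _ => ?_
          simp only [hF]
          rw [hterm σ, smul_smul]
          congr 1
          rw [Equiv.Perm.sign_mul, Fin.sign_cycleRange]
          simp only [Units.val_mul, Units.val_pow_eq_pow_val, Units.val_neg, Units.val_one]
          linear_combination (-((Equiv.Perm.sign σ : ℤˣ) : ℤ)) * hsq
      _ = ((-1:ℤ))^(k:ℕ) • ∑ σ : Equiv.Perm (Fin (m+1)),
            (((Equiv.Perm.sign (σ * k.cycleRange) : ℤˣ)):ℤ) • ∏ j, g ((σ * k.cycleRange) j) (e j) := by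
          rw [Finset.smul_sum]
      _ = ((-1:ℤ))^(k:ℕ) • ∑ σ : Equiv.Perm (Fin (m+1)),
            (Equiv.Perm.sign σ : ℤ) • ∏ j, g (σ j) (e j) := by
          congr 1
          exact Equiv.sum_comp (Equiv.mulRight k.cycleRange)
            (fun τ => ((Equiv.Perm.sign τ : ℤˣ) : ℤ) • ∏ j, g (τ j) (e j))
  -- insertion part equals Φ
  have hgap : ∑ σ : Equiv.Perm (Fin (m+1)),
      ∑ z ∈ (X ×ˢ D0).filter (fun z => ¬ ∃ k, z.2 k = z.1), F σ z.1 z.2 = Φ := by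
    rw [Finset.sum_comm]
    have hbij : (∑ z ∈ (X ×ˢ D0).filter (fun z => ¬ ∃ k, z.2 k = z.1),
          ∑ σ : Equiv.Perm (Fin (m+1)), F σ z.1 z.2)
        = ∑ ke ∈ (Finset.univ : Finset (Fin (m+1))) ×ˢ D1,
            ∑ σ : Equiv.Perm (Fin (m+1)), F σ (ke.2 ke.1) (ke.1.removeNth ke.2) := by
      symm

      refine Finset.sum_bij'
        (i := fun ke (_ : ke ∈ (Finset.univ : Finset (Fin (m+1))) ×ˢ D1) =>
          (ke.2 ke.1, ke.1.removeNth ke.2))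
        (j := fun z (_ : z ∈ (X ×ˢ D0).filter (fun z => ¬ ∃ k, z.2 k = z.1)) =>
          (insPos z.1 z.2, Fin.insertNth (insPos z.1 z.2) z.1 z.2))
        ?_ ?_ ?_ ?_ ?_
      · rintro ⟨k, e⟩ hke
        obtain ⟨-, he⟩ := Finset.mem_product.mp hke
        obtain ⟨hanti, hbd⟩ := mem_chainFinset.mp he
        refine Finset.mem_filter.mpr ⟨Finset.mem_product.mpr ⟨?_, ?_⟩, ?_⟩
        · exact Finset.mem_Ico.mpr (hbd k)
        · exact mem_chainFinset.mpr
            ⟨hanti.comp_strictMono (Fin.strictMono_succAbove k), fun i => hbd _⟩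
        · rintro ⟨i, hi⟩
          exact Fin.succAbove_ne k i (hanti.injective hi)
      · rintro ⟨x, d⟩ hz
        obtain ⟨hzmem, hnotex⟩ := Finset.mem_filter.mp hz
        obtain ⟨hx, hd⟩ := Finset.mem_product.mp hzmem
        obtain ⟨hdanti, hdbd⟩ := mem_chainFinset.mp hd
        have hne : ∀ i, d i ≠ x := fun i hi => hnotex ⟨i, hi⟩
        have hbnd : ∀ j, 1 ≤ Fin.insertNth (α := fun _ => ℕ) (insPos x d) x d j ∧
            Fin.insertNth (α := fun _ => ℕ) (insPos x d) x d j < b := by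
          intro j
          rcases eq_or_ne j (insPos x d) with rfl | hj
          · rw [Fin.insertNth_apply_same]
            exact Finset.mem_Ico.mp hx
          · obtain ⟨i, rfl⟩ := Fin.exists_succAbove_eq hj
            rw [Fin.insertNth_apply_succAbove]
            exact hdbd i
        exact Finset.mem_product.mpr ⟨Finset.mem_univ _,
          mem_chainFinset.mpr ⟨strictAnti_insertNth hdanti hne, hbnd⟩⟩
      · rintro ⟨k, e⟩ hke
        obtain ⟨-, he⟩ := Finset.mem_product.mp hke
        obtain ⟨hanti, -⟩ := mem_chainFinset.mp he
        have h1 : insPos (e k) (k.removeNth e) = k := insPos_removeNth hanti k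
        have h2 : Fin.insertNth (insPos (e k) (k.removeNth e)) (e k) (k.removeNth e) = e := by
          rw [h1]
          exact Fin.insertNth_self_removeNth k e
        exact Prod.ext h1 h2
      · rintro ⟨x, d⟩ hz
        show (Fin.insertNth (α := fun _ => ℕ) (insPos x d) x d (insPos x d),
          (insPos x d).removeNth (Fin.insertNth (α := fun _ => ℕ) (insPos x d) x d)) = (x, d)
        rw [Fin.insertNth_apply_same, Fin.removeNth_insertNth]
      · intro ke hke
        rfl
    rw [hbij]
    have hcurry : (∑ ke ∈ (Finset.univ : Finset (Fin (m+1))) ×ˢ D1,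
          ∑ σ : Equiv.Perm (Fin (m+1)), F σ (ke.2 ke.1) (ke.1.removeNth ke.2))
        = ∑ k : Fin (m+1), ∑ e ∈ D1, ∑ σ : Equiv.Perm (Fin (m+1)), F σ (e k) (k.removeNth e) :=
      Finset.sum_product' Finset.univ D1
        (fun k e => ∑ σ : Equiv.Perm (Fin (m+1)), F σ (e k) (k.removeNth e))
    rw [hcurry]
    calc ∑ k : Fin (m+1), ∑ e ∈ D1, ∑ σ : Equiv.Perm (Fin (m+1)), F σ (e k) (k.removeNth e)
        = ∑ k : Fin (m+1), ((-1:ℤ))^(k:ℕ) • Φ := by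
          refine Finset.sum_congr rfl fun k _ => ?_
          rw [Finset.sum_congr rfl fun e _ => hper k e, ← Finset.smul_sum, ← hΦ]
      _ = (∑ k : Fin (m+1), ((-1:ℤ))^(k:ℕ)) • Φ := (Finset.sum_smul).symm
      _ = Φ := by
          have h1 : ∑ k : Fin (m+1), ((-1:ℤ))^(k:ℕ) = 1 := by
            rw [Fin.sum_univ_eq_sum_range (fun k => ((-1:ℤ))^k) (m+1)]
            obtain ⟨t, rfl⟩ := hm
            rw [show t + t + 1 = 2*t+1 by ring]
            exact sum_range_neg_one_pow t
          rw [h1, one_smul]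
  -- assemble
  have hsplit : ∀ σ : Equiv.Perm (Fin (m+1)),
      ∑ z ∈ X ×ˢ D0, F σ z.1 z.2
        = (∑ z ∈ (X ×ˢ D0).filter (fun z => ∃ k, z.2 k = z.1), F σ z.1 z.2)
          + ∑ z ∈ (X ×ˢ D0).filter (fun z => ¬ ∃ k, z.2 k = z.1), F σ z.1 z.2 :=
    fun σ => (Finset.sum_filter_add_sum_filter_not _ _ _).symm
  have hfinal := htot
  rw [Finset.sum_congr rfl (fun σ _ => hsplit σ), Finset.sum_add_distrib, heq, hgap, zero_add]
    at hfinal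
  rw [hgoal]
  exact hfinal

end Statement15Aux

theorem statement15 (n : ℕ) (hodd : Odd n) (hpos : 0 < n)
    (s : Fin n → ℤ) (hinj : Function.Injective s) (hnz : ∀ i, s i ≠ 0) :
    ∃ T : Finset ℕ, ∀ p : ℕ, ∀ hp : p.Prime, p ∉ T →
      ∑ σ : Equiv.Perm (Fin n),
        (Equiv.Perm.sign σ : ℤ) • Zp p hp (List.ofFn (s ∘ σ)) = 0 := by
  classical
  obtain ⟨m, rfl⟩ : ∃ m, n = m + 1 := ⟨n - 1, (Nat.succ_pred_eq_of_pos hpos).symm⟩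
  have hm : Even m := by
    obtain ⟨t, ht⟩ := hodd
    exact ⟨t, by omega⟩
  set N : ℕ := Finset.univ.sup fun i => (s i).natAbs with hN
  refine ⟨Finset.range (N + 2), fun p hp hpT => ?_⟩
  haveI : Fact p.Prime := ⟨hp⟩
  have hpN : N + 2 ≤ p := not_lt.mp fun h => hpT (Finset.mem_range.mpr h)
  have hg0 : ∀ j : Fin (m+1), ∑ x ∈ Finset.Ico 1 p, ((x : ZMod p)) ^ (-(s j)) = 0 := by
    intro j
    have hsle : (s j).natAbs ≤ N := Finset.le_sup (f := fun i => (s i).natAbs) (Finset.mem_univ j)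
    refine Statement15Aux.sum_zpow_eq_zero (neg_ne_zero.mpr (hnz j)) ?_
    rw [Int.natAbs_neg]
    omega
  have hrw : ∀ σ : Equiv.Perm (Fin (m+1)), Zp p hp (List.ofFn (s ∘ σ)) =
      ∑ e ∈ Statement15Aux.chainFinset (m+1) p,
        ∏ j, ((e j : ZMod p)) ^ (-(s (σ j))) := fun σ => Statement15Aux.Zp_ofFn p (s ∘ σ)
  calc ∑ σ : Equiv.Perm (Fin (m+1)), (Equiv.Perm.sign σ : ℤ) • Zp p hp (List.ofFn (s ∘ σ))
      = ∑ σ : Equiv.Perm (Fin (m+1)), (Equiv.Perm.sign σ : ℤ) •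
          ∑ e ∈ Statement15Aux.chainFinset (m+1) p,
            ∏ j, ((e j : ZMod p)) ^ (-(s (σ j))) :=
        Finset.sum_congr rfl fun σ _ => by rw [hrw σ]
    _ = 0 := Statement15Aux.key p m hm (fun j x => ((x : ZMod p)) ^ (-(s j))) hg0

end
end
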